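/- arXiv:2509.21252 — 5 statements merged into one kernel-verified Lean document; each statement's English description precedes it below -/
import Mathlib

section
/- For all integers r ≥ 2, h ≥ 1, k ≥ 0, l ≥ 0 satisfying k + l + h ≤ r − 1, the rational number F(r,k,l,h) := Σ_{1 ≤ j ≤ s ≤ r} ((s+1−j)/(s(s+1))) · Σ_{0 ≤ c ≤ j−1} Σ_{0 ≤ d ≤ s−j} (−1)^{c+d} · C(j−1,c) · C(s−j,d) · C(c,k) · C(d+1,l) · C(c+d+1,h) is equal to 0. -/
section SenaryAux
open Finset

lemma nat1 (n k : ℕ) : ∑ i ∈ range (n+1), Nat.choose i k = Nat.choose (n+1) (k+1) := by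
  rw [← Nat.sum_Icc_choose]
  symm
  apply Finset.sum_subset
  · intro x hx
    simp only [mem_Icc] at hx
    exact mem_range.2 (by omega)
  · intro x hx hnx
    simp only [mem_Icc, mem_range, not_and, not_le] at hx hnx
    exact Nat.choose_eq_zero_of_lt (by omega)

lemma nat2 (c : ℕ) : ∀ e n : ℕ, ∑ i ∈ range (n+1), Nat.choose i c * Nat.choose (n-i) e
    = Nat.choose (n+1) (c+e+1)
  | 0, n => by simp [nat1]
  | e+1, 0 => by
    rw [show (0:ℕ)+1 = 1 from rfl, Finset.sum_range_one, Nat.sub_self,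
      Nat.choose_eq_zero_of_lt (show 0 < e+1 by omega),
      Nat.choose_eq_zero_of_lt (show 1 < c+(e+1)+1 by omega), Nat.mul_zero]
  | e+1, n+1 => by
    rw [Finset.sum_range_succ]
    have h1 : ∀ i ∈ range (n+1), Nat.choose i c * Nat.choose (n+1-i) (e+1)
        = Nat.choose i c * Nat.choose (n-i) e + Nat.choose i c * Nat.choose (n-i) (e+1) := by
      intro i hi
      have hi' := mem_range.1 hi
      have e2 : n+1-i = (n-i)+1 := by omega
      rw [e2, Nat.choose_succ_succ, Nat.mul_add]
    rw [Finset.sum_congr rfl h1, Finset.sum_add_distrib, nat2 c e n, nat2 c (e+1) n]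
    have : Nat.choose 0 (e+1) = 0 := Nat.choose_eq_zero_of_lt (by omega)
    simp only [Nat.sub_self, this, Nat.mul_zero, Nat.add_zero]
    rw [show c+(e+1)+1 = (c+e+1)+1 by omega, Nat.choose_succ_succ (n+1) (c+e+1)]

lemma smc (n k : ℕ) : (n+1) * Nat.choose n k = Nat.choose (n+1) (k+1) * (k+1) :=
  Nat.add_one_mul_choose_eq n k

lemma jsum (s c d : ℕ) (hs : 1 ≤ s) :
    ∑ j ∈ Icc 1 s, (s+1-j) * (Nat.choose (j-1) c * Nat.choose (s-j) d)
      = (d+1) * Nat.choose (s+1) (c+d+2) := by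
  rw [← Finset.Ico_add_one_right_eq_Icc, Finset.sum_Ico_eq_sum_range]
  have h : ∀ i ∈ range (s+1-1), (s+1-(1+i)) * (Nat.choose (1+i-1) c * Nat.choose (s-(1+i)) d)
      = (d+1) * (Nat.choose i c * Nat.choose (s-i) (d+1)) := by
    intro i hi
    have hi' : i < s := by have := mem_range.1 hi; omega
    have e1 : 1+i-1 = i := by omega
    have e2 : s+1-(1+i) = (s-(1+i))+1 := by omega
    have e3 : s - i = (s-(1+i))+1 := by omega
    rw [e1, e2, e3]
    calc ((s-(1+i))+1) * (Nat.choose i c * Nat.choose (s-(1+i)) d)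
        = Nat.choose i c * (((s-(1+i))+1) * Nat.choose (s-(1+i)) d) := by ring
      _ = Nat.choose i c * (Nat.choose ((s-(1+i))+1) (d+1) * (d+1)) := by rw [smc]
      _ = (d+1) * (Nat.choose i c * Nat.choose ((s-(1+i))+1) (d+1)) := by ring
  rw [Finset.sum_congr rfl h, ← Finset.mul_sum]
  congr 1
  have hext := Finset.sum_range_succ (fun i => Nat.choose i c * Nat.choose (s-i) (d+1)) s
  rw [show s+1-1 = s by omega]
  have h0 : Nat.choose (s-s) (d+1) = 0 := by
    rw [Nat.sub_self]; exact Nat.choose_eq_zero_of_lt (by omega)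
  rw [nat2 c (d+1) s, h0, Nat.mul_zero, Nat.add_zero,
    show c+(d+1)+1 = c+d+2 by omega] at hext
  omega

lemma natsplit (N l : ℕ) : N * Nat.choose N l = (l+1) * Nat.choose N (l+1) + l * Nat.choose N l := by
  rcases le_or_gt l N with hl | hl
  · have h := Nat.choose_succ_right_eq N l
    have : (l+1) * Nat.choose N (l+1) = Nat.choose N l * (N - l) := by rw [← h]; ring
    rw [this]
    have : Nat.choose N l * (N - l) + l * Nat.choose N l = Nat.choose N l * (N - l + l) := by ring
    rw [this, Nat.sub_add_cancel hl]; ring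
  · rw [Nat.choose_eq_zero_of_lt hl, Nat.choose_eq_zero_of_lt (by omega)]; ring

lemma Usum (k l m : ℕ) :
    ∑ c ∈ range (m+1), (m+1-c) * (Nat.choose c k * Nat.choose (m+1-c) l)
      = (l+1) * Nat.choose (m+2) (k+l+2) + l * Nat.choose (m+2) (k+l+1) := by
  have h : ∀ c ∈ range (m+1), (m+1-c) * (Nat.choose c k * Nat.choose (m+1-c) l)
      = (l+1) * (Nat.choose c k * Nat.choose (m+1-c) (l+1))
        + l * (Nat.choose c k * Nat.choose (m+1-c) l) := by
    intro c _
    calc (m+1-c) * (Nat.choose c k * Nat.choose (m+1-c) l)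
        = Nat.choose c k * ((m+1-c) * Nat.choose (m+1-c) l) := by ring
      _ = Nat.choose c k * ((l+1) * Nat.choose (m+1-c) (l+1) + l * Nat.choose (m+1-c) l) := by
          rw [natsplit]
      _ = _ := by ring
  rw [Finset.sum_congr rfl h, Finset.sum_add_distrib]
  congr 1
  · rw [← Finset.mul_sum]
    congr 1
    have hext := Finset.sum_range_succ (fun c => Nat.choose c k * Nat.choose (m+1-c) (l+1)) (m+1)
    have h0 : Nat.choose (m+1-(m+1)) (l+1) = 0 := by
      rw [Nat.sub_self]; exact Nat.choose_eq_zero_of_lt (by omega)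
    rw [nat2 k (l+1) (m+1), h0, Nat.mul_zero, Nat.add_zero,
      show k+(l+1)+1 = k+l+2 by omega] at hext
    omega
  · rcases Nat.eq_zero_or_pos l with rfl | hl
    · simp
    · rw [← Finset.mul_sum]
      congr 1
      have hext := Finset.sum_range_succ (fun c => Nat.choose c k * Nat.choose (m+1-c) l) (m+1)
      have h0 : Nat.choose (m+1-(m+1)) l = 0 := by
        rw [Nat.sub_self]; exact Nat.choose_eq_zero_of_lt hl
      rw [nat2 k l (m+1), h0, Nat.mul_zero, Nat.add_zero] at hext
      omega

lemma ratio2 (m K : ℕ) :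
    Nat.choose (m+2) (K+2) * ((K+1)*(K+2)) = Nat.choose m K * ((m+1)*(m+2)) := by
  have h1 := smc (m+1) (K+1)
  have h2 := smc m K
  calc Nat.choose (m+2) (K+2) * ((K+1)*(K+2))
      = (Nat.choose (m+2) (K+2) * (K+2)) * (K+1) := by ring
    _ = ((m+2) * Nat.choose (m+1) (K+1)) * (K+1) := by rw [← h1]
    _ = (m+2) * (Nat.choose (m+1) (K+1) * (K+1)) := by ring
    _ = (m+2) * ((m+1) * Nat.choose m K) := by rw [← h2]
    _ = _ := by ring

lemma colsum (r m : ℕ) (hr : 1 ≤ r) :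
    ∑ s ∈ Icc 1 r, Nat.choose (s-1) m = Nat.choose r (m+1) := by
  rw [← Finset.Ico_add_one_right_eq_Icc, Finset.sum_Ico_eq_sum_range]
  have h : ∀ i ∈ range (r+1-1), Nat.choose (1+i-1) m = Nat.choose i m := by
    intro i _
    rw [show 1+i-1 = i by omega]
  rw [Finset.sum_congr rfl h, show r+1-1 = r by omega]
  obtain ⟨t, rfl⟩ : ∃ t, r = t+1 := ⟨r-1, by omega⟩
  exact nat1 t m

lemma altQ (n : ℕ) : ∑ i ∈ range (n+1), (-1:ℚ)^i * Nat.choose n i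
    = if n = 0 then 1 else 0 := by
  have h := Int.alternating_sum_range_choose (n := n)
  have h2 : ((∑ m ∈ range (n+1), ((-1)^m * n.choose m : ℤ)) : ℚ)
      = ((if n = 0 then (1:ℤ) else 0) : ℚ) := by exact_mod_cast h
  push_cast at h2
  rw [h2]

lemma alt1 (n t : ℕ) : ∑ i ∈ range (n+1), (-1:ℚ)^i * Nat.choose n i * Nat.choose i t
    = if t = n then (-1:ℚ)^n else 0 := by
  rcases le_or_gt t n with htn | htn
  · have h1 : ∑ i ∈ range (n+1), (-1:ℚ)^i * Nat.choose n i * Nat.choose i t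
        = ∑ i ∈ Ico t (n+1), (-1:ℚ)^i * Nat.choose n i * Nat.choose i t := by
      symm
      apply Finset.sum_subset
      · intro x hx; simp only [mem_Ico] at hx; exact mem_range.2 hx.2
      · intro x hx hnx
        simp only [mem_range] at hx
        simp only [mem_Ico, not_and, not_le] at hnx
        have : x < t := by omega
        rw [Nat.choose_eq_zero_of_lt this]
        push_cast; ring
    rw [h1, Finset.sum_Ico_eq_sum_range]
    have h2 : ∀ i ∈ range (n+1-t), (-1:ℚ)^(t+i) * Nat.choose n (t+i) * Nat.choose (t+i) t
        = ((-1:ℚ)^t * Nat.choose n t) * ((-1:ℚ)^i * Nat.choose (n-t) i) := by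
      intro i hi
      have hi' : i < n+1-t := mem_range.1 hi
      have hc : Nat.choose n (t+i) * Nat.choose (t+i) t
          = Nat.choose n t * Nat.choose (n-t) i := by
        have h3 := Nat.choose_mul (n := n) (show t ≤ t+i by omega)
        rwa [show t+i-t = i by omega] at h3
      have hc' : (Nat.choose n (t+i) : ℚ) * Nat.choose (t+i) t
          = (Nat.choose n t : ℚ) * Nat.choose (n-t) i := by exact_mod_cast hc
      rw [pow_add]
      calc (-1:ℚ)^t * (-1:ℚ)^i * Nat.choose n (t+i) * Nat.choose (t+i) t
          = ((-1:ℚ)^t * (-1:ℚ)^i) * ((Nat.choose n (t+i) : ℚ) * Nat.choose (t+i) t) := by ring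
        _ = ((-1:ℚ)^t * (-1:ℚ)^i) * ((Nat.choose n t : ℚ) * Nat.choose (n-t) i) := by rw [hc']
        _ = _ := by ring
    rw [Finset.sum_congr rfl h2, ← Finset.mul_sum,
      show n+1-t = (n-t)+1 by omega, altQ]
    by_cases hnt : t = n
    · subst hnt
      simp
    · rw [if_neg (by omega), if_neg hnt]
      ring
  · rw [if_neg (by omega)]
    apply Finset.sum_eq_zero
    intro i hi
    have : i < t := by have := mem_range.1 hi; omega
    rw [Nat.choose_eq_zero_of_lt this]
    push_cast; ring

lemma altpoly (a K n : ℕ) (hK : K < n) :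
    ∑ i ∈ range (n+1), (-1:ℚ)^i * Nat.choose n i * Nat.choose (a+i) K = 0 := by
  have hv : ∀ i : ℕ, (Nat.choose (a+i) K : ℚ)
      = ∑ t ∈ range (K+1), (Nat.choose a t : ℚ) * Nat.choose i (K-t) := by
    intro i
    have h := Nat.add_choose_eq a i K
    rw [Finset.Nat.sum_antidiagonal_eq_sum_range_succ_mk] at h
    exact_mod_cast h
  have h1 : ∀ i ∈ range (n+1), (-1:ℚ)^i * Nat.choose n i * Nat.choose (a+i) K
      = ∑ t ∈ range (K+1), (Nat.choose a t : ℚ)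
          * ((-1:ℚ)^i * Nat.choose n i * Nat.choose i (K-t)) := by
    intro i _
    rw [hv i, Finset.mul_sum]
    exact Finset.sum_congr rfl fun t _ => by ring
  rw [Finset.sum_congr rfl h1, Finset.sum_comm]
  apply Finset.sum_eq_zero
  intro t ht
  rw [← Finset.mul_sum, alt1, if_neg (by omega)]
  ring

lemma master (r K h : ℕ) (hh : 1 ≤ h) (hKh : K + h < r) :
    ∑ m ∈ range r, (-1:ℚ)^m * Nat.choose m K * Nat.choose (m+1) h * Nat.choose r (m+1) = 0 := by
  have h1 : ∑ m ∈ range r, (-1:ℚ)^m * Nat.choose m K * Nat.choose (m+1) h * Nat.choose r (m+1)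
      = ∑ m ∈ Ico (h-1) r, (-1:ℚ)^m * Nat.choose m K * Nat.choose (m+1) h * Nat.choose r (m+1) := by
    symm
    apply Finset.sum_subset
    · intro x hx; simp only [mem_Ico] at hx; exact mem_range.2 hx.2
    · intro x hx hnx
      simp only [mem_range] at hx
      simp only [mem_Ico, not_and, not_le] at hnx
      have : x + 1 < h := by omega
      rw [Nat.choose_eq_zero_of_lt this]
      push_cast; ring
  rw [h1, Finset.sum_Ico_eq_sum_range, show r-(h-1) = (r-h)+1 by omega]
  have h2 : ∀ i ∈ range ((r-h)+1),
      (-1:ℚ)^(h-1+i) * Nat.choose (h-1+i) K * Nat.choose (h-1+i+1) h * Nat.choose r (h-1+i+1)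
      = ((-1:ℚ)^(h-1) * Nat.choose r h)
          * ((-1:ℚ)^i * Nat.choose (r-h) i * Nat.choose (h-1+i) K) := by
    intro i hi
    have hi' : i ≤ r - h := by have := mem_range.1 hi; omega
    rw [show h-1+i+1 = h+i by omega]
    have hc : Nat.choose r (h+i) * Nat.choose (h+i) h
        = Nat.choose r h * Nat.choose (r-h) i := by
      have h3 := Nat.choose_mul (n := r) (Nat.le_add_right h i)
      rwa [show h+i-h = i by omega] at h3
    have hc' : (Nat.choose r (h+i) : ℚ) * Nat.choose (h+i) h
        = (Nat.choose r h : ℚ) * Nat.choose (r-h) i := by exact_mod_cast hc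
    rw [pow_add]
    calc (-1:ℚ)^(h-1) * (-1:ℚ)^i * Nat.choose (h-1+i) K * Nat.choose (h+i) h * Nat.choose r (h+i)
        = ((-1:ℚ)^(h-1) * (-1:ℚ)^i * Nat.choose (h-1+i) K)
            * ((Nat.choose r (h+i) : ℚ) * Nat.choose (h+i) h) := by ring
      _ = ((-1:ℚ)^(h-1) * (-1:ℚ)^i * Nat.choose (h-1+i) K)
            * ((Nat.choose r h : ℚ) * Nat.choose (r-h) i) := by rw [hc']
      _ = _ := by ring
  rw [Finset.sum_congr rfl h2, ← Finset.mul_sum]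
  have := altpoly (h-1) K (r-h) (by omega)
  rw [this, mul_zero]
lemma keyratio (s m : ℕ) (hs : 1 ≤ s) :
    (Nat.choose (s+1) (m+2) : ℚ) / ((s:ℚ)*((s:ℚ)+1))
      = (Nat.choose (s-1) m : ℚ) / (((m:ℚ)+1)*((m:ℚ)+2)) := by
  rw [div_eq_div_iff (by positivity) (by positivity)]
  have h := ratio2 (s-1) m
  rw [show s-1+2 = s+1 by omega, show s-1+1 = s by omega] at h
  exact_mod_cast h

lemma keyratio2 (m K : ℕ) :
    (Nat.choose (m+2) (K+2) : ℚ) / (((m:ℚ)+1)*((m:ℚ)+2))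
      = (Nat.choose m K : ℚ) / (((K:ℚ)+1)*((K:ℚ)+2)) := by
  rw [div_eq_div_iff (by positivity) (by positivity)]
  exact_mod_cast ratio2 m K

lemma stepA (k l h s r : ℕ) (hs : 1 ≤ s) (hsr : s ≤ r) :
    (∑ j ∈ Icc 1 s, (((s:ℚ)+1-(j:ℚ))/((s:ℚ)*((s:ℚ)+1))) *
      ∑ c ∈ range j, ∑ d ∈ range (s-j+1),
        (-1:ℚ)^(c+d) * (Nat.choose (j-1) c : ℚ) * (Nat.choose (s-j) d : ℚ)
          * (Nat.choose c k : ℚ) * (Nat.choose (d+1) l : ℚ) * (Nat.choose (c+d+1) h : ℚ))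
    = ∑ c ∈ range r, ∑ d ∈ range r,
        (-1:ℚ)^(c+d) * (Nat.choose c k : ℚ) * (Nat.choose (d+1) l : ℚ)
          * (Nat.choose (c+d+1) h : ℚ)
          * (((d:ℚ)+1) * (Nat.choose (s-1) (c+d) : ℚ)
              / (((c:ℚ)+(d:ℚ)+1)*((c:ℚ)+(d:ℚ)+2))) := by
  have key : ∀ c d : ℕ,
      ((-1:ℚ)^(c+d) * (Nat.choose c k : ℚ) * (Nat.choose (d+1) l : ℚ)
        * (Nat.choose (c+d+1) h : ℚ))
        * (((d:ℚ)+1) * (Nat.choose (s+1) (c+d+2) : ℚ)) / ((s:ℚ)*((s:ℚ)+1))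
      = (-1:ℚ)^(c+d) * (Nat.choose c k : ℚ) * (Nat.choose (d+1) l : ℚ)
          * (Nat.choose (c+d+1) h : ℚ)
          * (((d:ℚ)+1) * (Nat.choose (s-1) (c+d) : ℚ)
              / (((c:ℚ)+(d:ℚ)+1)*((c:ℚ)+(d:ℚ)+2))) := by
    intro c d
    have hkr := keyratio s (c+d) hs
    push_cast at hkr
    have e1 : ((-1:ℚ)^(c+d) * (Nat.choose c k : ℚ) * (Nat.choose (d+1) l : ℚ)
        * (Nat.choose (c+d+1) h : ℚ))
        * (((d:ℚ)+1) * (Nat.choose (s+1) (c+d+2) : ℚ)) / ((s:ℚ)*((s:ℚ)+1))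
        = ((-1:ℚ)^(c+d) * (Nat.choose c k : ℚ) * (Nat.choose (d+1) l : ℚ)
            * (Nat.choose (c+d+1) h : ℚ) * ((d:ℚ)+1))
          * ((Nat.choose (s+1) (c+d+2) : ℚ) / ((s:ℚ)*((s:ℚ)+1))) := by ring
    rw [e1, hkr]
    ring
  have g1 : (∑ j ∈ Icc 1 s, (((s:ℚ)+1-(j:ℚ))/((s:ℚ)*((s:ℚ)+1))) *
      ∑ c ∈ range j, ∑ d ∈ range (s-j+1),
        (-1:ℚ)^(c+d) * (Nat.choose (j-1) c : ℚ) * (Nat.choose (s-j) d : ℚ)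
          * (Nat.choose c k : ℚ) * (Nat.choose (d+1) l : ℚ) * (Nat.choose (c+d+1) h : ℚ))
      = ∑ j ∈ Icc 1 s, ∑ c ∈ range s, ∑ d ∈ range s,
          (((s+1-j : ℕ) : ℚ) *
            ((-1:ℚ)^(c+d) * (Nat.choose (j-1) c : ℚ) * (Nat.choose (s-j) d : ℚ)
              * (Nat.choose c k : ℚ) * (Nat.choose (d+1) l : ℚ)
              * (Nat.choose (c+d+1) h : ℚ))) / ((s:ℚ)*((s:ℚ)+1)) := by
    refine Finset.sum_congr rfl fun j hj => ?_
    obtain ⟨hj1, hjs⟩ := mem_Icc.1 hj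
    have hw : ((s:ℚ)+1-(j:ℚ)) = ((s+1-j : ℕ) : ℚ) := by
      rw [Nat.cast_sub (by omega)]
      push_cast; ring
    have hd : ∀ c : ℕ, (∑ d ∈ range (s-j+1),
        (-1:ℚ)^(c+d) * (Nat.choose (j-1) c : ℚ) * (Nat.choose (s-j) d : ℚ)
          * (Nat.choose c k : ℚ) * (Nat.choose (d+1) l : ℚ)
          * (Nat.choose (c+d+1) h : ℚ))
        = ∑ d ∈ range s,
        (-1:ℚ)^(c+d) * (Nat.choose (j-1) c : ℚ) * (Nat.choose (s-j) d : ℚ)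
          * (Nat.choose c k : ℚ) * (Nat.choose (d+1) l : ℚ)
          * (Nat.choose (c+d+1) h : ℚ) := by
      intro c
      apply Finset.sum_subset
      · exact Finset.range_subset_range.2 (by omega)
      · intro d hd1 hd2
        simp only [mem_range] at hd1 hd2
        rw [Nat.choose_eq_zero_of_lt (show s-j < d by omega)]
        push_cast; ring
    have hext : (∑ c ∈ range j, ∑ d ∈ range (s-j+1),
        (-1:ℚ)^(c+d) * (Nat.choose (j-1) c : ℚ) * (Nat.choose (s-j) d : ℚ)
          * (Nat.choose c k : ℚ) * (Nat.choose (d+1) l : ℚ)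
          * (Nat.choose (c+d+1) h : ℚ))
        = ∑ c ∈ range s, ∑ d ∈ range s,
        (-1:ℚ)^(c+d) * (Nat.choose (j-1) c : ℚ) * (Nat.choose (s-j) d : ℚ)
          * (Nat.choose c k : ℚ) * (Nat.choose (d+1) l : ℚ)
          * (Nat.choose (c+d+1) h : ℚ) := by
      rw [Finset.sum_congr rfl (fun c _ => hd c)]
      apply Finset.sum_subset
      · exact Finset.range_subset_range.2 (by omega)
      · intro c hc1 hc2
        simp only [mem_range] at hc1 hc2
        apply Finset.sum_eq_zero
        intro d _
        rw [Nat.choose_eq_zero_of_lt (show j-1 < c by omega)]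
        push_cast; ring
    rw [hw, hext, div_mul_eq_mul_div, Finset.mul_sum, Finset.sum_div]
    refine Finset.sum_congr rfl fun c _ => ?_
    rw [Finset.mul_sum, Finset.sum_div]
  have g2 : (∑ j ∈ Icc 1 s, ∑ c ∈ range s, ∑ d ∈ range s,
          (((s+1-j : ℕ) : ℚ) *
            ((-1:ℚ)^(c+d) * (Nat.choose (j-1) c : ℚ) * (Nat.choose (s-j) d : ℚ)
              * (Nat.choose c k : ℚ) * (Nat.choose (d+1) l : ℚ)
              * (Nat.choose (c+d+1) h : ℚ))) / ((s:ℚ)*((s:ℚ)+1)))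
      = ∑ c ∈ range s, ∑ d ∈ range s, ∑ j ∈ Icc 1 s,
          (((s+1-j : ℕ) : ℚ) *
            ((-1:ℚ)^(c+d) * (Nat.choose (j-1) c : ℚ) * (Nat.choose (s-j) d : ℚ)
              * (Nat.choose c k : ℚ) * (Nat.choose (d+1) l : ℚ)
              * (Nat.choose (c+d+1) h : ℚ))) / ((s:ℚ)*((s:ℚ)+1)) := by
    rw [Finset.sum_comm]
    exact Finset.sum_congr rfl fun c _ => Finset.sum_comm
  have g3 : (∑ c ∈ range s, ∑ d ∈ range s, ∑ j ∈ Icc 1 s,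
          (((s+1-j : ℕ) : ℚ) *
            ((-1:ℚ)^(c+d) * (Nat.choose (j-1) c : ℚ) * (Nat.choose (s-j) d : ℚ)
              * (Nat.choose c k : ℚ) * (Nat.choose (d+1) l : ℚ)
              * (Nat.choose (c+d+1) h : ℚ))) / ((s:ℚ)*((s:ℚ)+1)))
      = ∑ c ∈ range s, ∑ d ∈ range s,
        (-1:ℚ)^(c+d) * (Nat.choose c k : ℚ) * (Nat.choose (d+1) l : ℚ)
          * (Nat.choose (c+d+1) h : ℚ)
          * (((d:ℚ)+1) * (Nat.choose (s-1) (c+d) : ℚ)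
              / (((c:ℚ)+(d:ℚ)+1)*((c:ℚ)+(d:ℚ)+2))) := by
    refine Finset.sum_congr rfl fun c _ => Finset.sum_congr rfl fun d _ => ?_
    have hjn := jsum s c d hs
    have hj : (((∑ j ∈ Icc 1 s, (s+1-j) * (Nat.choose (j-1) c * Nat.choose (s-j) d) : ℕ)) : ℚ)
        = (((d+1) * Nat.choose (s+1) (c+d+2) : ℕ) : ℚ) := by exact_mod_cast hjn
    push_cast at hj
    have hterm : ∀ j ∈ Icc 1 s,
        (((s+1-j : ℕ) : ℚ) *
          ((-1:ℚ)^(c+d) * (Nat.choose (j-1) c : ℚ) * (Nat.choose (s-j) d : ℚ)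
            * (Nat.choose c k : ℚ) * (Nat.choose (d+1) l : ℚ)
            * (Nat.choose (c+d+1) h : ℚ))) / ((s:ℚ)*((s:ℚ)+1))
        = (((-1:ℚ)^(c+d) * (Nat.choose c k : ℚ) * (Nat.choose (d+1) l : ℚ)
            * (Nat.choose (c+d+1) h : ℚ)) / ((s:ℚ)*((s:ℚ)+1)))
          * (((s+1-j : ℕ) : ℚ) * ((Nat.choose (j-1) c : ℚ) * (Nat.choose (s-j) d : ℚ))) := by
      intro j _; ring
    rw [Finset.sum_congr rfl hterm, ← Finset.mul_sum, hj, ← key c d]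
    ring
  have g4 : (∑ c ∈ range s, ∑ d ∈ range s,
        (-1:ℚ)^(c+d) * (Nat.choose c k : ℚ) * (Nat.choose (d+1) l : ℚ)
          * (Nat.choose (c+d+1) h : ℚ)
          * (((d:ℚ)+1) * (Nat.choose (s-1) (c+d) : ℚ)
              / (((c:ℚ)+(d:ℚ)+1)*((c:ℚ)+(d:ℚ)+2))))
      = ∑ c ∈ range r, ∑ d ∈ range r,
        (-1:ℚ)^(c+d) * (Nat.choose c k : ℚ) * (Nat.choose (d+1) l : ℚ)
          * (Nat.choose (c+d+1) h : ℚ)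
          * (((d:ℚ)+1) * (Nat.choose (s-1) (c+d) : ℚ)
              / (((c:ℚ)+(d:ℚ)+1)*((c:ℚ)+(d:ℚ)+2))) := by
    have hd : ∀ c : ℕ, (∑ d ∈ range s,
        (-1:ℚ)^(c+d) * (Nat.choose c k : ℚ) * (Nat.choose (d+1) l : ℚ)
          * (Nat.choose (c+d+1) h : ℚ)
          * (((d:ℚ)+1) * (Nat.choose (s-1) (c+d) : ℚ)
              / (((c:ℚ)+(d:ℚ)+1)*((c:ℚ)+(d:ℚ)+2))))
        = ∑ d ∈ range r,
        (-1:ℚ)^(c+d) * (Nat.choose c k : ℚ) * (Nat.choose (d+1) l : ℚ)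
          * (Nat.choose (c+d+1) h : ℚ)
          * (((d:ℚ)+1) * (Nat.choose (s-1) (c+d) : ℚ)
              / (((c:ℚ)+(d:ℚ)+1)*((c:ℚ)+(d:ℚ)+2))) := by
      intro c
      apply Finset.sum_subset
      · exact Finset.range_subset_range.2 hsr
      · intro d hd1 hd2
        simp only [mem_range] at hd1 hd2
        rw [Nat.choose_eq_zero_of_lt (show s-1 < c+d by omega)]
        push_cast; ring
    rw [Finset.sum_congr rfl (fun c _ => hd c)]
    apply Finset.sum_subset
    · exact Finset.range_subset_range.2 hsr
    · intro c hc1 hc2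
      simp only [mem_range] at hc1 hc2
      apply Finset.sum_eq_zero
      intro d _
      rw [Nat.choose_eq_zero_of_lt (show s-1 < c+d by omega)]
      push_cast; ring
  exact g1.trans (g2.trans (g3.trans g4))

end SenaryAux

section Main
open Finset

/-- **Lemma on vanishing binomial sums (senary relation key lemma).**
For integers `r ≥ 2`, `h ≥ 1`, `k, l ≥ 0` with `k + l + h ≤ r - 1`, the rational number
`F(r,k,l,h)` vanishes. -/
theorem stmt_0 (r k l h : ℕ) (hr : 2 ≤ r) (hh : 1 ≤ h) (hklh : k + l + h ≤ r - 1) :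
    ∑ s ∈ Finset.Icc 1 r, ∑ j ∈ Finset.Icc 1 s,
      (((s : ℚ) + 1 - (j : ℚ)) / ((s : ℚ) * ((s : ℚ) + 1))) *
        ∑ c ∈ Finset.range j, ∑ d ∈ Finset.range (s - j + 1),
          (-1 : ℚ) ^ (c + d) * (Nat.choose (j - 1) c : ℚ) * (Nat.choose (s - j) d : ℚ) *
            (Nat.choose c k : ℚ) * (Nat.choose (d + 1) l : ℚ) *
            (Nat.choose (c + d + 1) h : ℚ) = 0 := by
  have e1 : ∑ s ∈ Finset.Icc 1 r, ∑ j ∈ Finset.Icc 1 s,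
      (((s : ℚ) + 1 - (j : ℚ)) / ((s : ℚ) * ((s : ℚ) + 1))) *
        ∑ c ∈ Finset.range j, ∑ d ∈ Finset.range (s - j + 1),
          (-1 : ℚ) ^ (c + d) * (Nat.choose (j - 1) c : ℚ) * (Nat.choose (s - j) d : ℚ) *
            (Nat.choose c k : ℚ) * (Nat.choose (d + 1) l : ℚ) *
            (Nat.choose (c + d + 1) h : ℚ)
      = ∑ s ∈ Icc 1 r, ∑ c ∈ range r, ∑ d ∈ range r,
          (-1:ℚ)^(c+d) * (Nat.choose c k : ℚ) * (Nat.choose (d+1) l : ℚ)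
            * (Nat.choose (c+d+1) h : ℚ)
            * (((d:ℚ)+1) * (Nat.choose (s-1) (c+d) : ℚ)
                / (((c:ℚ)+(d:ℚ)+1)*((c:ℚ)+(d:ℚ)+2))) := by
    refine Finset.sum_congr rfl fun s hs => ?_
    obtain ⟨hs1, hs2⟩ := mem_Icc.1 hs
    exact stepA k l h s r hs1 hs2
  have e2 : ∑ s ∈ Icc 1 r, ∑ c ∈ range r, ∑ d ∈ range r,
          (-1:ℚ)^(c+d) * (Nat.choose c k : ℚ) * (Nat.choose (d+1) l : ℚ)
            * (Nat.choose (c+d+1) h : ℚ)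
            * (((d:ℚ)+1) * (Nat.choose (s-1) (c+d) : ℚ)
                / (((c:ℚ)+(d:ℚ)+1)*((c:ℚ)+(d:ℚ)+2)))
      = ∑ c ∈ range r, ∑ d ∈ range r, ∑ s ∈ Icc 1 r,
          (-1:ℚ)^(c+d) * (Nat.choose c k : ℚ) * (Nat.choose (d+1) l : ℚ)
            * (Nat.choose (c+d+1) h : ℚ)
            * (((d:ℚ)+1) * (Nat.choose (s-1) (c+d) : ℚ)
                / (((c:ℚ)+(d:ℚ)+1)*((c:ℚ)+(d:ℚ)+2))) := by
    rw [Finset.sum_comm]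
    exact Finset.sum_congr rfl fun c _ => Finset.sum_comm
  have e3 : ∑ c ∈ range r, ∑ d ∈ range r, ∑ s ∈ Icc 1 r,
          (-1:ℚ)^(c+d) * (Nat.choose c k : ℚ) * (Nat.choose (d+1) l : ℚ)
            * (Nat.choose (c+d+1) h : ℚ)
            * (((d:ℚ)+1) * (Nat.choose (s-1) (c+d) : ℚ)
                / (((c:ℚ)+(d:ℚ)+1)*((c:ℚ)+(d:ℚ)+2)))
      = ∑ c ∈ range r, ∑ d ∈ range r,
          (-1:ℚ)^(c+d) * (Nat.choose c k : ℚ) * (Nat.choose (d+1) l : ℚ)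
            * (Nat.choose (c+d+1) h : ℚ)
            * (((d:ℚ)+1) * (Nat.choose r (c+d+1) : ℚ)
                / (((c:ℚ)+(d:ℚ)+1)*((c:ℚ)+(d:ℚ)+2))) := by
    refine Finset.sum_congr rfl fun c _ => Finset.sum_congr rfl fun d _ => ?_
    have hterm : ∀ s ∈ Icc 1 r,
        (-1:ℚ)^(c+d) * (Nat.choose c k : ℚ) * (Nat.choose (d+1) l : ℚ)
          * (Nat.choose (c+d+1) h : ℚ)
          * (((d:ℚ)+1) * (Nat.choose (s-1) (c+d) : ℚ)
              / (((c:ℚ)+(d:ℚ)+1)*((c:ℚ)+(d:ℚ)+2)))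
        = ((-1:ℚ)^(c+d) * (Nat.choose c k : ℚ) * (Nat.choose (d+1) l : ℚ)
            * (Nat.choose (c+d+1) h : ℚ)
            * (((d:ℚ)+1) / (((c:ℚ)+(d:ℚ)+1)*((c:ℚ)+(d:ℚ)+2))))
          * (Nat.choose (s-1) (c+d) : ℚ) := by
      intro s _; ring
    rw [Finset.sum_congr rfl hterm, ← Finset.mul_sum]
    have hcol : ∑ s ∈ Icc 1 r, ((Nat.choose (s-1) (c+d) : ℕ) : ℚ)
        = ((Nat.choose r (c+d+1) : ℕ) : ℚ) := by
      exact_mod_cast colsum r (c+d) (by omega)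
    rw [hcol]; ring
  have e4 : ∑ c ∈ range r, ∑ d ∈ range r,
          (-1:ℚ)^(c+d) * (Nat.choose c k : ℚ) * (Nat.choose (d+1) l : ℚ)
            * (Nat.choose (c+d+1) h : ℚ)
            * (((d:ℚ)+1) * (Nat.choose r (c+d+1) : ℚ)
                / (((c:ℚ)+(d:ℚ)+1)*((c:ℚ)+(d:ℚ)+2)))
      = ∑ c ∈ range r, ∑ d ∈ range (r-c),
          (-1:ℚ)^(c+d) * (Nat.choose c k : ℚ) * (Nat.choose (d+1) l : ℚ)
            * (Nat.choose (c+d+1) h : ℚ)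
            * (((d:ℚ)+1) * (Nat.choose r (c+d+1) : ℚ)
                / (((c:ℚ)+(d:ℚ)+1)*((c:ℚ)+(d:ℚ)+2))) := by
    refine Finset.sum_congr rfl fun c hc => ?_
    symm
    apply Finset.sum_subset
    · exact Finset.range_subset_range.2 (by omega)
    · intro d hd1 hd2
      simp only [mem_range] at hd1 hd2
      rw [Nat.choose_eq_zero_of_lt (show r < c+d+1 by omega)]
      push_cast; ring
  have e5 : ∑ c ∈ range r, ∑ d ∈ range (r-c),
          (-1:ℚ)^(c+d) * (Nat.choose c k : ℚ) * (Nat.choose (d+1) l : ℚ)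
            * (Nat.choose (c+d+1) h : ℚ)
            * (((d:ℚ)+1) * (Nat.choose r (c+d+1) : ℚ)
                / (((c:ℚ)+(d:ℚ)+1)*((c:ℚ)+(d:ℚ)+2)))
      = ∑ m ∈ range r, ∑ c ∈ range (m+1),
          (-1:ℚ)^(c+(m-c)) * (Nat.choose c k : ℚ) * (Nat.choose ((m-c)+1) l : ℚ)
            * (Nat.choose (c+(m-c)+1) h : ℚ)
            * ((((m-c : ℕ):ℚ)+1) * (Nat.choose r (c+(m-c)+1) : ℚ)
                / (((c:ℚ)+((m-c:ℕ):ℚ)+1)*((c:ℚ)+((m-c:ℕ):ℚ)+2))) :=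
    (Finset.sum_range_diag_flip r _).symm
  have e6 : ∑ m ∈ range r, ∑ c ∈ range (m+1),
          (-1:ℚ)^(c+(m-c)) * (Nat.choose c k : ℚ) * (Nat.choose ((m-c)+1) l : ℚ)
            * (Nat.choose (c+(m-c)+1) h : ℚ)
            * ((((m-c : ℕ):ℚ)+1) * (Nat.choose r (c+(m-c)+1) : ℚ)
                / (((c:ℚ)+((m-c:ℕ):ℚ)+1)*((c:ℚ)+((m-c:ℕ):ℚ)+2)))
      = ∑ m ∈ range r,
          ((-1:ℚ)^m * (Nat.choose (m+1) h : ℚ) * (Nat.choose r (m+1) : ℚ)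
              / (((m:ℚ)+1)*((m:ℚ)+2)))
            * ((((l:ℚ)+1) * (Nat.choose (m+2) (k+l+2) : ℚ)
                + (l:ℚ) * (Nat.choose (m+2) (k+l+1) : ℚ))) := by
    refine Finset.sum_congr rfl fun m _ => ?_
    have hterm : ∀ c ∈ range (m+1),
        (-1:ℚ)^(c+(m-c)) * (Nat.choose c k : ℚ) * (Nat.choose ((m-c)+1) l : ℚ)
          * (Nat.choose (c+(m-c)+1) h : ℚ)
          * ((((m-c : ℕ):ℚ)+1) * (Nat.choose r (c+(m-c)+1) : ℚ)
              / (((c:ℚ)+((m-c:ℕ):ℚ)+1)*((c:ℚ)+((m-c:ℕ):ℚ)+2)))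
        = ((-1:ℚ)^m * (Nat.choose (m+1) h : ℚ) * (Nat.choose r (m+1) : ℚ)
            / (((m:ℚ)+1)*((m:ℚ)+2)))
          * (((m+1-c) * (Nat.choose c k * Nat.choose (m+1-c) l) : ℕ) : ℚ) := by
      intro c hc
      have hc' : c ≤ m := by have := mem_range.1 hc; omega
      rw [show c+(m-c) = m by omega, show (m-c)+1 = m+1-c by omega,
        show ((m-c : ℕ):ℚ) = (m:ℚ)-(c:ℚ) from by rw [Nat.cast_sub hc']]
      push_cast [Nat.cast_sub (show c ≤ m+1 by omega)]
      ring
    rw [Finset.sum_congr rfl hterm, ← Finset.mul_sum]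
    have hU : ∑ c ∈ range (m+1),
        (((m+1-c) * (Nat.choose c k * Nat.choose (m+1-c) l) : ℕ) : ℚ)
        = (((l+1) * Nat.choose (m+2) (k+l+2) + l * Nat.choose (m+2) (k+l+1) : ℕ) : ℚ) := by
      exact_mod_cast Usum k l m
    rw [hU]
    push_cast
    ring
  have e7 : ∑ m ∈ range r,
          ((-1:ℚ)^m * (Nat.choose (m+1) h : ℚ) * (Nat.choose r (m+1) : ℚ)
              / (((m:ℚ)+1)*((m:ℚ)+2)))
            * ((((l:ℚ)+1) * (Nat.choose (m+2) (k+l+2) : ℚ)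
                + (l:ℚ) * (Nat.choose (m+2) (k+l+1) : ℚ)))
      = (∑ m ∈ range r, ((-1:ℚ)^m * (Nat.choose (m+1) h : ℚ) * (Nat.choose r (m+1) : ℚ))
            * (((l:ℚ)+1) * ((Nat.choose (m+2) (k+l+2) : ℚ) / (((m:ℚ)+1)*((m:ℚ)+2)))))
        + ∑ m ∈ range r, ((-1:ℚ)^m * (Nat.choose (m+1) h : ℚ) * (Nat.choose r (m+1) : ℚ))
            * ((l:ℚ) * ((Nat.choose (m+2) (k+l+1) : ℚ) / (((m:ℚ)+1)*((m:ℚ)+2)))) := by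
    rw [← Finset.sum_add_distrib]
    refine Finset.sum_congr rfl fun m _ => ?_
    ring
  have hfirst : ∑ m ∈ range r, ((-1:ℚ)^m * (Nat.choose (m+1) h : ℚ) * (Nat.choose r (m+1) : ℚ))
            * (((l:ℚ)+1) * ((Nat.choose (m+2) (k+l+2) : ℚ) / (((m:ℚ)+1)*((m:ℚ)+2)))) = 0 := by
    have hterm : ∀ m ∈ range r,
        ((-1:ℚ)^m * (Nat.choose (m+1) h : ℚ) * (Nat.choose r (m+1) : ℚ))
          * (((l:ℚ)+1) * ((Nat.choose (m+2) (k+l+2) : ℚ) / (((m:ℚ)+1)*((m:ℚ)+2))))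
        = (((l:ℚ)+1) / ((((k+l:ℕ):ℚ)+1)*(((k+l:ℕ):ℚ)+2)))
          * ((-1:ℚ)^m * (Nat.choose m (k+l) : ℚ) * (Nat.choose (m+1) h : ℚ)
              * (Nat.choose r (m+1) : ℚ)) := by
      intro m _
      rw [keyratio2 m (k+l)]
      ring
    rw [Finset.sum_congr rfl hterm, ← Finset.mul_sum,
      master r (k+l) h hh (by omega), mul_zero]
  have hsecond : ∑ m ∈ range r, ((-1:ℚ)^m * (Nat.choose (m+1) h : ℚ) * (Nat.choose r (m+1) : ℚ))
            * ((l:ℚ) * ((Nat.choose (m+2) (k+l+1) : ℚ) / (((m:ℚ)+1)*((m:ℚ)+2)))) = 0 := by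
    rcases Nat.eq_zero_or_pos l with rfl | hl
    · apply Finset.sum_eq_zero
      intro m _
      norm_num
    · have hterm : ∀ m ∈ range r,
          ((-1:ℚ)^m * (Nat.choose (m+1) h : ℚ) * (Nat.choose r (m+1) : ℚ))
            * ((l:ℚ) * ((Nat.choose (m+2) (k+l+1) : ℚ) / (((m:ℚ)+1)*((m:ℚ)+2))))
          = ((l:ℚ) / ((((k+l-1:ℕ):ℚ)+1)*(((k+l-1:ℕ):ℚ)+2)))
            * ((-1:ℚ)^m * (Nat.choose m (k+l-1) : ℚ) * (Nat.choose (m+1) h : ℚ)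
                * (Nat.choose r (m+1) : ℚ)) := by
        intro m _
        rw [show k+l+1 = (k+l-1)+2 by omega, keyratio2 m (k+l-1)]
        ring
      rw [Finset.sum_congr rfl hterm, ← Finset.mul_sum,
        master r (k+l-1) h hh (by omega), mul_zero]
  rw [e1, e2, e3, e4, e5, e6, e7, hfirst, hsecond, add_zero]

end Main
end

section
/- For all nonnegative integers n, k, l, one has Σ_{d=0}^{n} (d+1) · C(d+1,l) · C(n−d,k) = l · C(n+2, k+l+1) + (l+1) · C(n+2, k+l+2). -/
open Finset

/-- Dual Vandermonde: `∑_{i=0}^{m} C(i,l) C(m-i,k) = C(m+1, k+l+1)`. -/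
lemma aux_dual_vandermonde : ∀ (m k l : ℕ),
    ∑ i ∈ range (m + 1), Nat.choose i l * Nat.choose (m - i) k
      = Nat.choose (m + 1) (k + l + 1) := by
  intro m
  induction m with
  | zero =>
    intro k l
    simp only [range_one, sum_singleton, Nat.zero_sub]
    rcases k with _ | k <;> rcases l with _ | l <;> simp [Nat.choose]
  | succ m ih =>
    intro k l
    rcases k with _ | k
    · -- k = 0 : hockey stick
      have h0 : ∀ i ∈ range (m + 2), Nat.choose i l * Nat.choose (m + 1 - i) 0
          = Nat.choose i l := by intro i _; simp
      rw [Finset.sum_congr rfl h0]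
      have h1 : ∑ i ∈ range (m + 2), Nat.choose i l = ∑ i ∈ Icc l (m + 1), Nat.choose i l := by
        symm
        apply Finset.sum_subset
        · intro i hi
          simp only [Finset.mem_Icc] at hi
          simp only [Finset.mem_range]
          omega
        · intro i hi hni
          simp only [Finset.mem_range] at hi
          simp only [Finset.mem_Icc, not_and, not_le] at hni
          exact Nat.choose_eq_zero_of_lt (by omega)
      rw [h1, Nat.sum_Icc_choose]
      norm_num
    · -- k = k+1 : Pascal
      rw [Finset.sum_range_succ]
      have h0 : ∀ i ∈ range (m + 1),
          Nat.choose i l * Nat.choose (m + 1 - i) (k + 1)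
            = Nat.choose i l * Nat.choose (m - i) (k + 1)
              + Nat.choose i l * Nat.choose (m - i) k := by
        intro i hi
        simp only [Finset.mem_range] at hi
        have hmi : m + 1 - i = (m - i) + 1 := by omega
        rw [hmi, Nat.choose_succ_succ', Nat.mul_add]
        ring
      rw [Finset.sum_congr rfl h0, Finset.sum_add_distrib, ih (k + 1) l, ih k l]
      simp only [Nat.sub_self]
      have hz : Nat.choose (m + 1) l * Nat.choose 0 (k + 1) = 0 := by simp
      rw [hz, Nat.add_zero]
      have hp : Nat.choose (m + 1 + 1) (k + 1 + l + 1)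
          = Nat.choose (m + 1) (k + l + 1) + Nat.choose (m + 1) (k + 1 + l + 1) := by
        rw [show k + 1 + l + 1 = (k + l + 1) + 1 by ring, Nat.choose_succ_succ]
      omega

/-- `(m+1) C(m+1,s) = s C(m+1,s) + (s+1) C(m+1,s+1)`. -/
lemma aux_pointwise (m s : ℕ) :
    (m + 1) * Nat.choose (m + 1) s
      = s * Nat.choose (m + 1) s + (s + 1) * Nat.choose (m + 1) (s + 1) := by
  rcases le_or_gt s (m + 1) with h | h
  · have h1 := Nat.choose_succ_right_eq (m + 1) s
    obtain ⟨t, ht⟩ : ∃ t, m + 1 = s + t := ⟨m + 1 - s, by omega⟩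
    rw [mul_comm (s + 1) (Nat.choose (m + 1) (s + 1)), h1, show m + 1 - s = t by omega, ht]
    ring
  · rw [Nat.choose_eq_zero_of_lt h, Nat.choose_eq_zero_of_lt (by omega)]
    simp

lemma aux_shift (n k l : ℕ) :
    ∑ d ∈ range (n + 1), Nat.choose (d + 1) (l + 1) * Nat.choose (n - d) k
      = Nat.choose (n + 2) (k + l + 2) := by
  have h := aux_dual_vandermonde (n + 1) k (l + 1)
  rw [Finset.sum_range_succ'] at h
  simp only [Nat.choose_zero_succ, Nat.zero_mul, Nat.add_zero] at h
  have h2 : ∀ d, n + 1 - (d + 1) = n - d := fun d => by omega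
  simp only [h2] at h
  rw [show n + 2 = n + 1 + 1 from rfl, show k + l + 2 = k + (l + 1) + 1 by ring]
  exact h

/-- `Σ_{d=0}^{n} (d+1) C(d+1,l) C(n-d,k) = l C(n+2,k+l+1) + (l+1) C(n+2,k+l+2)`. -/
theorem stmt_2 (n k l : ℕ) :
    ∑ d ∈ Finset.range (n + 1), (d + 1) * Nat.choose (d + 1) l * Nat.choose (n - d) k
      = l * Nat.choose (n + 2) (k + l + 1) + (l + 1) * Nat.choose (n + 2) (k + l + 2) := by
  have h0 : ∀ d ∈ range (n + 1),
      (d + 1) * Nat.choose (d + 1) l * Nat.choose (n - d) k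
        = l * (Nat.choose (d + 1) l * Nat.choose (n - d) k)
          + (l + 1) * (Nat.choose (d + 1) (l + 1) * Nat.choose (n - d) k) := by
    intro d _
    rw [← Nat.mul_assoc, ← Nat.mul_assoc, aux_pointwise d l, Nat.add_mul]
  rw [Finset.sum_congr rfl h0, Finset.sum_add_distrib, ← Finset.mul_sum, ← Finset.mul_sum,
    aux_shift n k l]
  congr 1
  rcases Nat.eq_zero_or_pos l with hl | hl
  · subst hl; simp
  · obtain ⟨l', rfl⟩ : ∃ l', l = l' + 1 := ⟨l - 1, by omega⟩
    rw [aux_shift n k l', show k + (l' + 1) + 1 = k + l' + 2 by ring]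
end

section
/- For all bimoulds A and B and every sequence w = ((u_1,v_1),…,(u_r,v_r)), one has swamu(A,B)(w) = Σ_{j=0}^{r} A(b_j) · B(a_j), where: for 1 ≤ j ≤ r−1, a_j = ((u_1, v_1−v_{j+1}), …, (u_j, v_j−v_{j+1})) and b_j = ((u_1+⋯+u_{j+1}, v_{j+1}), (u_{j+2}, v_{j+2}), …, (u_r, v_r)); for j = 0, a_0 = ∅ and b_0 = w; and for j = r, a_r = w and b_r = ∅. -/
/-- A bimould: a function assigning to every finite sequence of pairs `(u, v)` of
elements of `K` an element of `R`. -/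
abbrev Bimould (K R : Type*) := List (K × K) → R

variable {K R : Type*} [CommRing K] [CommRing R]

/-- The (non-commutative) mould product `mu`:
`mu(A,B)(w) = Σ_{w = a·b} A(a) B(b)` over all prefix/suffix decompositions of `w`. -/
def mu (A B : Bimould K R) : Bimould K R :=
  fun w => ∑ i ∈ Finset.range (w.length + 1), A (w.take i) * B (w.drop i)

/-- The sequence transformation underlying `swap`: for `w = ((u_1,v_1),…,(u_r,v_r))` it
returns `((v_r, u_1+⋯+u_r), (v_{r-1}-v_r, u_1+⋯+u_{r-1}), …, (v_1-v_2, u_1))`. -/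
def swapSeq (w : List (K × K)) : List (K × K) :=
  List.ofFn fun i : Fin w.length =>
    ((w.getD (w.length - 1 - (i : ℕ)) (0, 0)).2 - (w.getD (w.length - (i : ℕ)) (0, 0)).2,
      ((w.take (w.length - (i : ℕ))).map Prod.fst).sum)

/-- The involution `swap`. -/
def swap (A : Bimould K R) : Bimould K R := fun w => A (swapSeq w)

/-- The involution `anti`, reversing the sequence of letters. -/
def anti (A : Bimould K R) : Bimould K R := fun w => A w.reverse

/-- `swamu`, the `swap`-conjugation of `mu`. -/
def swamu (A B : Bimould K R) : Bimould K R := swap (mu (swap A) (swap B))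

/-- `answamu`, the `swap ∘ anti`-conjugation of `mu`. -/
def answamu (A B : Bimould K R) : Bimould K R :=
  anti (swap (mu (swap (anti A)) (swap (anti B))))

/-- The sequence `a_j = ((u_1, v_1 - v_{j+1}), …, (u_j, v_j - v_{j+1}))`, with the
conventions `a_0 = ∅` and `a_r = w`. -/
def aSeq (w : List (K × K)) (j : ℕ) : List (K × K) :=
  (w.take j).map fun p => (p.1, p.2 - (w.getD j (0, 0)).2)

/-- The sequence `b_j = ((u_1+⋯+u_{j+1}, v_{j+1}), (u_{j+2}, v_{j+2}), …, (u_r, v_r))`,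
with the conventions `b_0 = w` and `b_r = ∅`. -/
def bSeq (w : List (K × K)) (j : ℕ) : List (K × K) :=
  if j = w.length then []
  else (((w.take (j + 1)).map Prod.fst).sum, (w.getD j (0, 0)).2) :: w.drop (j + 1)


lemma swapSeq_length (w : List (K × K)) : (swapSeq w).length = w.length := by
  simp [swapSeq]

lemma swapSeq_getD (w : List (K × K)) (k : ℕ) (hk : k < w.length) :
    (swapSeq w).getD k (0,0) =
      ((w.getD (w.length - 1 - k) (0,0)).2 - (w.getD (w.length - k) (0,0)).2,
       ((w.take (w.length - k)).map Prod.fst).sum) := by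
  rw [List.getD_eq_getElem _ _ (by rw [swapSeq_length]; exact hk)]
  simp [swapSeq]

lemma U_step (w : List (K × K)) (t : ℕ) (ht : t < w.length) :
    ((w.take (t+1)).map Prod.fst).sum
      = ((w.take t).map Prod.fst).sum + (w.getD t (0,0)).1 := by
  rw [List.map_take, List.map_take, List.sum_take_succ _ t (by simpa using ht),
    List.getElem_map, List.getD_eq_getElem _ _ ht]

lemma sum_map_fst (l : List (K × K)) :
    (l.map Prod.fst).sum = ∑ i ∈ Finset.range l.length, (l.getD i (0,0)).1 := by
  induction l with
  | nil => simp
  | cons a l ih =>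
    rw [List.length_cons, Finset.sum_range_succ']
    simp [ih, add_comm]


lemma drop_swap (w : List (K × K)) (j : ℕ) (hj : j ≤ w.length) :
    swapSeq ((swapSeq w).drop (w.length - j)) = aSeq w j := by
  have hd : ((swapSeq w).drop (w.length - j)).length = j := by
    rw [List.length_drop, swapSeq_length]; omega
  have hdget : ∀ k, k < j → ((swapSeq w).drop (w.length - j)).getD k (0,0) =
      ((w.getD (j-1-k) (0,0)).2 - (w.getD (j-k) (0,0)).2,
       ((w.take (j-k)).map Prod.fst).sum) := by
    intro k hk
    rw [List.getD_eq_getElem _ _ (by omega : k < ((swapSeq w).drop (w.length - j)).length),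
      List.getElem_drop,
      ← List.getD_eq_getElem _ (0,0) (by rw [swapSeq_length]; omega),
      swapSeq_getD _ _ (by omega)]
    have e1 : w.length - 1 - (w.length - j + k) = j - 1 - k := by omega
    have e2 : w.length - (w.length - j + k) = j - k := by omega
    rw [e1, e2]
  set d := (swapSeq w).drop (w.length - j) with hdd
  have hd2 : ∀ k, k ≤ j → (d.getD k (0,0)).2 = ((w.take (j-k)).map Prod.fst).sum := by
    intro k hk
    rcases eq_or_lt_of_le hk with rfl | hk
    · rw [List.getD_eq_default _ _ (by omega)]
      simp
    · rw [hdget k hk]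
  apply List.ext_getElem
  · simp only [swapSeq_length, hd, aSeq, List.length_map, List.length_take]
    omega
  · intro t h1 h2
    have ht : t < j := by rwa [swapSeq_length, hd] at h1
    have htr : t < w.length := by omega
    have hrhs : (aSeq w j)[t]'h2 = ((w[t]'htr).1, (w[t]'htr).2 - (w.getD j (0,0)).2) := by
      simp [aSeq]
    rw [hrhs]
    show (List.ofFn _)[t]'(by rw [List.length_ofFn]; rwa [swapSeq_length] at h1) = _
    rw [List.getElem_ofFn]
    refine Prod.ext ?_ ?_
    · show (d.getD (d.length - 1 - t) (0,0)).2 - (d.getD (d.length - t) (0,0)).2 = _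
      rw [hd2 (d.length - 1 - t) (by omega), hd2 (d.length - t) (by omega), hd]
      have e1 : j - (j - 1 - t) = t + 1 := by omega
      have e2 : j - (j - t) = t := by omega
      rw [e1, e2, U_step w t htr, List.getD_eq_getElem _ _ htr]
      ring
    · show ((d.take (d.length - t)).map Prod.fst).sum = _
      rw [sum_map_fst]
      have hl : (d.take (d.length - t)).length = j - t := by
        rw [List.length_take, hd]; omega
      rw [hl]
      have hterm : ∀ i ∈ Finset.range (j - t), ((d.take (d.length - t)).getD i (0,0)).1
          = (w.getD (j - (i+1)) (0,0)).2 - (w.getD (j - i) (0,0)).2 := by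
        intro i hi
        rw [Finset.mem_range] at hi
        rw [List.getD_eq_getElem _ _ (by rw [hl]; omega : i < (d.take (d.length - t)).length),
          List.getElem_take, ← List.getD_eq_getElem _ (0,0) (by omega : i < d.length),
          hdget i (by omega)]
        have : j - 1 - i = j - (i + 1) := by omega
        rw [this]
      rw [Finset.sum_congr rfl hterm, Finset.sum_range_sub (fun i => (w.getD (j - i) (0,0)).2)]
      have e3 : j - (j - t) = t := by omega
      rw [e3, Nat.sub_zero, List.getD_eq_getElem _ _ htr]

lemma take_swap (w : List (K × K)) (j : ℕ) (hj : j ≤ w.length) :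
    swapSeq ((swapSeq w).take (w.length - j)) = bSeq w j := by
  rcases eq_or_lt_of_le hj with rfl | hjr
  · simp [bSeq, swapSeq]
  have hd : ((swapSeq w).take (w.length - j)).length = w.length - j := by
    rw [List.length_take, swapSeq_length]; omega
  have hdget : ∀ k, k < w.length - j → ((swapSeq w).take (w.length - j)).getD k (0,0) =
      ((w.getD (w.length-1-k) (0,0)).2 - (w.getD (w.length-k) (0,0)).2,
       ((w.take (w.length-k)).map Prod.fst).sum) := by
    intro k hk
    rw [List.getD_eq_getElem _ _ (by omega : k < ((swapSeq w).take (w.length - j)).length),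
      List.getElem_take,
      ← List.getD_eq_getElem _ (0,0) (by rw [swapSeq_length]; omega),
      swapSeq_getD _ _ (by omega)]
  set d := (swapSeq w).take (w.length - j) with hdd
  have hbne : ¬ (j = w.length) := by omega
  apply List.ext_getElem
  · simp only [swapSeq_length, hd, bSeq, if_neg hbne, List.length_cons, List.length_drop]
    omega
  · intro t h1 h2
    have ht : t < w.length - j := by rwa [swapSeq_length, hd] at h1
    -- second components of d via getD, valid for k ≤ w.length - j with k < ... careful at k = len
    show (List.ofFn _)[t]'(by rw [List.length_ofFn]; rwa [swapSeq_length] at h1) = _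
    rw [List.getElem_ofFn]
    have hsum : ((d.take (d.length - t)).map Prod.fst).sum = (w.getD (j + t) (0,0)).2 := by
      rw [sum_map_fst]
      have hl : (d.take (d.length - t)).length = w.length - j - t := by
        rw [List.length_take, hd]; omega
      rw [hl]
      have hterm : ∀ i ∈ Finset.range (w.length - j - t),
          ((d.take (d.length - t)).getD i (0,0)).1
          = (w.getD (w.length - (i+1)) (0,0)).2 - (w.getD (w.length - i) (0,0)).2 := by
        intro i hi
        rw [Finset.mem_range] at hi
        rw [List.getD_eq_getElem _ _ (by rw [hl]; omega : i < (d.take (d.length - t)).length),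
          List.getElem_take, ← List.getD_eq_getElem _ (0,0) (by omega : i < d.length),
          hdget i (by omega)]
        have : w.length - 1 - i = w.length - (i + 1) := by omega
        rw [this]
      rw [Finset.sum_congr rfl hterm,
        Finset.sum_range_sub (fun i => (w.getD (w.length - i) (0,0)).2)]
      have e3 : w.length - (w.length - j - t) = j + t := by omega
      rw [e3, Nat.sub_zero, List.getD_eq_default _ _ (le_refl _), sub_zero]
    have hfst1 : (d.getD (d.length - 1 - t) (0,0)).2
        = ((w.take (j + t + 1)).map Prod.fst).sum := by
      rw [hdget _ (by omega)]
      have : w.length - (d.length - 1 - t) = j + t + 1 := by omega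
      rw [this]
    rcases t with _ | s
    · have hsecond : (d.getD (d.length - 0) (0,0)).2 = 0 := by
        rw [List.getD_eq_default _ _ (by omega)]
      refine Prod.ext ?_ ?_
      · show (d.getD (d.length - 1 - 0) (0,0)).2 - (d.getD (d.length - 0) (0,0)).2
            = (bSeq w j)[0].1
        rw [hfst1, hsecond, sub_zero]
        simp [bSeq, if_neg hbne]
      · show ((d.take (d.length - 0)).map Prod.fst).sum = (bSeq w j)[0].2
        rw [hsum]
        simp [bSeq, if_neg hbne]
    · have hjs : j + (s+1) < w.length := by omega
      have hsecond : (d.getD (d.length - (s+1)) (0,0)).2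
          = ((w.take (j + s + 1)).map Prod.fst).sum := by
        rw [hdget _ (by omega)]
        have : w.length - (d.length - (s+1)) = j + s + 1 := by omega
        rw [this]
      have hrhs : (bSeq w j)[s+1]'h2 = w[j+1+s]'(by omega) := by
        simp only [bSeq, if_neg hbne, List.getElem_cons_succ]
        rw [List.getElem_drop]
      rw [hrhs]
      refine Prod.ext ?_ ?_
      · show (d.getD (d.length - 1 - (s+1)) (0,0)).2 - (d.getD (d.length - (s+1)) (0,0)).2 = _
        rw [hfst1, hsecond]
        have e : j + (s+1) + 1 = (j + s + 1) + 1 := by omega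
        rw [e, U_step w (j+s+1) (by omega), List.getD_eq_getElem _ _ (by omega : j+s+1 < w.length)]
        have e2 : j + s + 1 = j + 1 + s := by omega
        simp [e2]
      · show ((d.take (d.length - (s+1))).map Prod.fst).sum = _
        rw [hsum, List.getD_eq_getElem _ _ (by omega : j + (s+1) < w.length)]
        have e2 : j + (s+1) = j + 1 + s := by omega
        simp [e2]

/-- Explicit formula for `swamu`: `swamu(A,B)(w) = Σ_{j=0}^{r} A(b_j) B(a_j)`. -/
theorem stmt_4 (A B : Bimould K R) (w : List (K × K)) :
    swamu A B w = ∑ j ∈ Finset.range (w.length + 1), A (bSeq w j) * B (aSeq w j) := by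
  unfold swamu swap mu
  rw [swapSeq_length, ← Finset.sum_range_reflect]
  refine Finset.sum_congr rfl fun i hi => ?_
  rw [Finset.mem_range] at hi
  have e0 : w.length + 1 - 1 - i = w.length - i := by omega
  rw [e0, ← take_swap w i (by omega), ← drop_swap w i (by omega)]
end

section
/- For all bimoulds A and B and every sequence w = ((u_1,v_1),…,(u_r,v_r)), one has answamu(A,B)(w) = Σ_{j=0}^{r} A(a'_j) · B(b'_j), where: for 1 ≤ j ≤ r−1, a'_j = ((u_1,v_1), …, (u_{j−1},v_{j−1}), (u_j+u_{j+1}+⋯+u_r, v_j)) and b'_j = ((u_{j+1}, v_{j+1}−v_j), …, (u_r, v_r−v_j)); for j = 0, a'_0 = ∅ and b'_0 = w; and for j = r, a'_r = w and b'_r = ∅. -/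
variable {K R : Type*} [CommRing K] [CommRing R]

/-- The sequence `a'_j = ((u_1,v_1), …, (u_{j-1},v_{j-1}), (u_j+⋯+u_r, v_j))`, with the
conventions `a'_0 = ∅` and `a'_r = w`. -/
def aSeq' (w : List (K × K)) (j : ℕ) : List (K × K) :=
  if j = 0 then []
  else w.take (j - 1) ++
    [(((w.drop (j - 1)).map Prod.fst).sum, (w.getD (j - 1) (0, 0)).2)]

/-- The sequence `b'_j = ((u_{j+1}, v_{j+1} - v_j), …, (u_r, v_r - v_j))`, with the
conventions `b'_0 = w` and `b'_r = ∅`. -/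
def bSeq' (w : List (K × K)) (j : ℕ) : List (K × K) :=
  if j = 0 then w
  else (w.drop j).map fun p => (p.1, p.2 - (w.getD (j - 1) (0, 0)).2)


namespace Stmt5Aux

variable {K : Type*} [CommRing K]

/-- `vv w k = v_k`, with `v_0 = 0`. -/
def vv (w : List (K × K)) (k : ℕ) : K := if k = 0 then 0 else (w.getD (k-1) (0,0)).2

/-- `us w k = u_{k+1} + ⋯ + u_r`. -/
def us (w : List (K × K)) (k : ℕ) : K := ((w.drop k).map Prod.fst).sum

lemma length_swapSeq (L : List (K × K)) : (swapSeq L).length = L.length := by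
  simp [swapSeq]

lemma getElem_swapSeq (L : List (K × K)) (m : ℕ) (h : m < (swapSeq L).length) :
    (swapSeq L)[m] =
      ((L.getD (L.length - 1 - m) (0,0)).2 - (L.getD (L.length - m) (0,0)).2,
        ((L.take (L.length - m)).map Prod.fst).sum) := by
  simp [swapSeq, List.getElem_ofFn]

lemma S_get (w : List (K × K)) (k : ℕ) (h : k < (swapSeq w.reverse).length) :
    (swapSeq w.reverse)[k] = (vv w (k+1) - vv w k, us w k) := by
  have hk : k < w.length := by simpa [length_swapSeq] using h
  rw [getElem_swapSeq]
  congr 1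
  · congr 1
    · rw [List.getD_eq_getElem _ _ (by simp; omega), List.getElem_reverse, vv]
      simp only [List.length_reverse]
      rw [List.getD_eq_getElem _ _ (by omega)]
      congr 2
      omega
    · rcases Nat.eq_zero_or_pos k with hk0 | hk0
      · subst hk0
        rw [List.getD_eq_default _ _ (by simp), vv]
        simp
      · rw [List.getD_eq_getElem _ _ (by simp; omega), List.getElem_reverse, vv]
        simp only [List.length_reverse]
        rw [if_neg (by omega), List.getD_eq_getElem _ _ (by omega)]
        congr 2
        omega
  · rw [us, List.length_reverse, List.take_reverse]
    have : w.length - (w.length - k) = k := by omega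
    rw [this, List.map_reverse, List.sum_reverse]

lemma tele (f : ℕ → K) (i n : ℕ) :
    ∑ m ∈ Finset.range n, (f (i+m+1) - f (i+m)) = f (i+n) - f i := by
  induction n with
  | zero => simp
  | succ n ih =>
    rw [Finset.sum_range_succ, ih]
    have e : i + (n+1) = i+n+1 := by omega
    rw [e]; ring

lemma sum_take (L : List K) (n : ℕ) (hn : n ≤ L.length) :
    (L.take n).sum = ∑ m ∈ Finset.range n, L.getD m 0 := by
  induction n with
  | zero => simp
  | succ n ih =>
    rw [List.sum_take_succ _ _ (by omega), ih (by omega), Finset.sum_range_succ,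
      List.getD_eq_getElem _ _ (by omega)]

lemma sum_map_take (T : List (K × K)) (n : ℕ) (hn : n ≤ T.length) :
    ((T.take n).map Prod.fst).sum = ∑ m ∈ Finset.range n, (T.getD m (0,0)).1 := by
  rw [List.map_take, sum_take _ _ (by simpa)]
  refine Finset.sum_congr rfl fun m hm => ?_
  have hm' : m < T.length := by have := Finset.mem_range.mp hm; omega
  rw [List.getD_eq_getElem _ _ (by simpa), List.getD_eq_getElem _ _ hm', List.getElem_map]

lemma us_succ (w : List (K × K)) (k : ℕ) (h : k < w.length) :
    us w k = w[k].1 + us w (k+1) := by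
  rw [us, us, List.drop_eq_getElem_cons h, List.map_cons, List.sum_cons]

lemma vv_succ (w : List (K × K)) (k : ℕ) (h : k < w.length) :
    vv w (k+1) = w[k].2 := by
  rw [vv, if_neg (by omega), List.getD_eq_getElem _ _ (by omega)]
  simp

lemma take_eq (w : List (K × K)) (i : ℕ) (hi : i ≤ w.length) :
    (swapSeq ((swapSeq w.reverse).take i)).reverse = aSeq' w i := by
  rcases Nat.eq_zero_or_pos i with h0 | h0
  · subst h0; simp [aSeq', swapSeq]
  have hi0 : ¬ i = 0 := by omega
  have hS : (swapSeq w.reverse).length = w.length := by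
    rw [length_swapSeq, List.length_reverse]
  have hT : ((swapSeq w.reverse).take i).length = i := by
    rw [List.length_take]; omega
  have hTgetk : ∀ m, m < i →
      ((swapSeq w.reverse).take i).getD m (0,0) = (vv w (m+1) - vv w m, us w m) := by
    intro m hm
    rw [List.getD_eq_getElem _ _ (by omega), List.getElem_take, S_get w m (by omega)]
  have hr : aSeq' w i = w.take (i-1) ++ [(us w (i-1), vv w i)] := by
    rw [aSeq', if_neg hi0, us, vv, if_neg hi0]
  apply List.ext_getElem
  · rw [List.length_reverse, length_swapSeq, hT, hr, List.length_append,
      List.length_take, List.length_singleton]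
    omega
  · intro k h1 h2
    have hk : k < i := by
      rw [List.length_reverse, length_swapSeq, hT] at h1; exact h1
    rw [List.getElem_reverse, getElem_swapSeq]
    have e1 : ((swapSeq w.reverse).take i).length - 1 -
        ((swapSeq ((swapSeq w.reverse).take i)).length - 1 - k) = k := by
      rw [length_swapSeq, hT]; omega
    have e2 : ((swapSeq w.reverse).take i).length -
        ((swapSeq ((swapSeq w.reverse).take i)).length - 1 - k) = k + 1 := by
      rw [length_swapSeq, hT]; omega
    rw [e1, e2]
    have hsum : ((((swapSeq w.reverse).take i).take (k+1)).map Prod.fst).sum = vv w (k+1) := by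
      rw [sum_map_take _ _ (by omega)]
      rw [Finset.sum_congr rfl fun m hm => by
        rw [hTgetk m (by have := Finset.mem_range.mp hm; omega)]]
      rw [Finset.sum_range_sub (vv w)]
      simp [vv]
    rw [hsum, hTgetk k hk]
    simp only [hr] at h2 ⊢
    rcases Nat.lt_or_ge (k+1) i with hki | hki
    · rw [hTgetk (k+1) hki]
      rw [List.getElem_append_left (by rw [List.length_take]; omega), List.getElem_take]
      refine Prod.ext ?_ ?_
      · show us w k - us w (k+1) = w[k].1
        rw [us_succ w k (by omega)]; ring
      · exact vv_succ w k (by omega)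
    · have hk1 : k = i - 1 := by omega
      rw [List.getD_eq_default _ _ (by rw [hT]; omega)]
      rw [List.getElem_append_right (by rw [List.length_take]; omega)]
      have e3 : k - (w.take (i-1)).length = 0 := by rw [List.length_take]; omega
      simp only [e3, List.getElem_singleton]
      refine Prod.ext ?_ ?_
      · show us w k - (0:K×K).2 = us w (i-1)
        rw [hk1]; simp
      · show vv w (k+1) = vv w i
        congr 1; omega

lemma drop_eq (w : List (K × K)) (i : ℕ) (hi : i ≤ w.length) :
    (swapSeq ((swapSeq w.reverse).drop i)).reverse = bSeq' w i := by
  have hS : (swapSeq w.reverse).length = w.length := by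
    rw [length_swapSeq, List.length_reverse]
  have hD : ((swapSeq w.reverse).drop i).length = w.length - i := by
    rw [List.length_drop, hS]
  have hDgetk : ∀ m, m < w.length - i →
      ((swapSeq w.reverse).drop i).getD m (0,0)
        = (vv w (i+m+1) - vv w (i+m), us w (i+m)) := by
    intro m hm
    rw [List.getD_eq_getElem _ _ (by omega), List.getElem_drop, S_get w (i+m) (by omega)]
  have hblen : (bSeq' w i).length = w.length - i := by
    rw [bSeq']
    rcases Nat.eq_zero_or_pos i with h0 | h0
    · rw [if_pos h0]; omega
    · rw [if_neg (by omega), List.length_map, List.length_drop]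
  apply List.ext_getElem
  · rw [List.length_reverse, length_swapSeq, hD, hblen]
  · intro k h1 h2
    have hk : k < w.length - i := by
      rw [List.length_reverse, length_swapSeq, hD] at h1; exact h1
    rw [List.getElem_reverse, getElem_swapSeq]
    have e1 : ((swapSeq w.reverse).drop i).length - 1 -
        ((swapSeq ((swapSeq w.reverse).drop i)).length - 1 - k) = k := by
      rw [length_swapSeq, hD]; omega
    have e2 : ((swapSeq w.reverse).drop i).length -
        ((swapSeq ((swapSeq w.reverse).drop i)).length - 1 - k) = k + 1 := by
      rw [length_swapSeq, hD]; omega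
    rw [e1, e2]
    have hsum : ((((swapSeq w.reverse).drop i).take (k+1)).map Prod.fst).sum
        = vv w (i+k+1) - vv w i := by
      rw [sum_map_take _ _ (by omega)]
      rw [Finset.sum_congr rfl fun m hm => by
        rw [hDgetk m (by have := Finset.mem_range.mp hm; omega)]]
      rw [tele (vv w) i (k+1)]
      have e : i + (k+1) = i + k + 1 := by omega
      rw [e]
    have hfst : (((swapSeq w.reverse).drop i).getD k (0,0)).2
        - (((swapSeq w.reverse).drop i).getD (k+1) (0,0)).2 = w[i+k].1 := by
      rw [hDgetk k hk]
      rcases Nat.lt_or_ge (k+1) (w.length - i) with hki | hki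
      · rw [hDgetk (k+1) hki]
        show us w (i+k) - us w (i+(k+1)) = w[i+k].1
        have e : i + (k+1) = i + k + 1 := by omega
        rw [e, us_succ w (i+k) (by omega)]; ring
      · rw [List.getD_eq_default _ _ (by rw [hD]; omega)]
        show us w (i+k) - (0:K×K).2 = w[i+k].1
        have hik : i + k = w.length - 1 := by omega
        rw [us_succ w (i+k) (by omega)]
        have : us w (i+k+1) = 0 := by
          rw [us]
          have : w.length ≤ i + k + 1 := by omega
          rw [List.drop_eq_nil_of_le this]
          simp
        rw [this]
        simp
    rw [hsum, hfst]
    rcases Nat.eq_zero_or_pos i with h0 | h0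
    · subst h0
      have hb0 : bSeq' w 0 = w := by rw [bSeq', if_pos rfl]
      simp only [hb0] at h2 ⊢
      refine Prod.ext ?_ ?_
      · simp
      · show vv w (0+k+1) - vv w 0 = w[k].2
        rw [vv_succ w (0+k) (by omega)]
        simp [vv]
    · have hi0 : ¬ i = 0 := by omega
      have hb : bSeq' w i = (w.drop i).map fun p => (p.1, p.2 - vv w i) := by
        rw [bSeq', if_neg hi0, vv, if_neg hi0]
      simp only [hb] at h2 ⊢
      rw [List.getElem_map, List.getElem_drop]
      refine Prod.ext ?_ ?_
      · simp
      · show vv w (i+k+1) - vv w i = w[i+k].2 - vv w i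
        rw [vv_succ w (i+k) (by omega)]

end Stmt5Aux

/-- Explicit formula for `answamu`: `answamu(A,B)(w) = Σ_{j=0}^{r} A(a'_j) B(b'_j)`. -/
theorem stmt_5 (A B : Bimould K R) (w : List (K × K)) :
    answamu A B w = ∑ j ∈ Finset.range (w.length + 1), A (aSeq' w j) * B (bSeq' w j) := by
  show mu (swap (anti A)) (swap (anti B)) (swapSeq w.reverse) = _
  rw [mu]
  rw [Stmt5Aux.length_swapSeq, List.length_reverse]
  refine Finset.sum_congr rfl fun i hi => ?_
  have hi' : i ≤ w.length := by have := Finset.mem_range.mp hi; omega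
  show A (swapSeq ((swapSeq w.reverse).take i)).reverse
      * B (swapSeq ((swapSeq w.reverse).drop i)).reverse = _
  rw [Stmt5Aux.take_eq w i hi', Stmt5Aux.drop_eq w i hi']
end

section
/- For all bimoulds A, B, C such that A(∅) = 0, one has swamu(answamu(A,B), C) = answamu(swamu(A,C), B). -/
variable {K R : Type*} [CommRing K] [CommRing R]

set_option linter.unusedSectionVars false

namespace Stmt8Aux

def usum (w : List (K × K)) : K := (w.map Prod.fst).sum

def vat (w : List (K × K)) (j : ℕ) : K := (w.getD j (0,0)).2

def Fseg (j : ℕ) (w : List (K × K)) : List (K × K) :=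
  if j < w.length then (usum (w.take (j+1)), vat w j) :: w.drop (j+1) else []

def Gseg (j : ℕ) (w : List (K × K)) : List (K × K) :=
  (w.take j).map fun p => (p.1, p.2 - vat w j)

def Frseg (j : ℕ) (w : List (K × K)) : List (K × K) := (Fseg j w.reverse).reverse

def Grseg (j : ℕ) (w : List (K × K)) : List (K × K) := (Gseg j w.reverse).reverse

@[simp] lemma length_swapSeq (w : List (K × K)) : (swapSeq w).length = w.length := by
  simp [swapSeq]

@[simp] lemma usum_nil : usum ([] : List (K × K)) = 0 := rfl

lemma usum_append (l₁ l₂ : List (K × K)) : usum (l₁ ++ l₂) = usum l₁ + usum l₂ := by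
  simp [usum]

lemma usum_take_succ (l : List (K × K)) (i : ℕ) (h : i < l.length) :
    usum (l.take (i+1)) = usum (l.take i) + (l.getD i (0,0)).1 := by
  rw [List.take_succ, usum_append, List.getElem?_eq_getElem h, List.getD_eq_getElem _ _ h]
  simp [usum]

lemma usum_take_add (l : List (K × K)) (i q : ℕ) :
    usum ((l.drop i).take q) = usum (l.take (i+q)) - usum (l.take i) := by
  rw [List.take_add, usum_append]; ring

lemma getD_take {α : Type*} (l : List α) (i s : ℕ) (d : α) (h : s < i) :
    (l.take i).getD s d = l.getD s d := by
  simp [List.getD_eq_getElem?_getD, List.getElem?_take, h]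

lemma getD_drop {α : Type*} (l : List α) (i s : ℕ) (d : α) :
    (l.drop i).getD s d = l.getD (i+s) d := by
  simp [List.getD_eq_getElem?_getD, List.getElem?_drop]

lemma getD_swapSeq_fst (w : List (K × K)) (s : ℕ) :
    ((swapSeq w).getD s (0,0)).1 = vat w (w.length - 1 - s) - vat w (w.length - s) := by
  rcases lt_or_ge s w.length with h | h
  · rw [List.getD_eq_getElem _ _ (by simpa using h)]
    simp [swapSeq, List.getElem_ofFn, vat]
  · rw [List.getD_eq_default _ _ (by simpa using h)]
    have h1 : w.length - 1 - s = 0 := by omega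
    have h2 : w.length - s = 0 := by omega
    simp [h1, h2]

lemma getD_swapSeq_snd (w : List (K × K)) (s : ℕ) :
    ((swapSeq w).getD s (0,0)).2 = usum (w.take (w.length - s)) := by
  rcases lt_or_ge s w.length with h | h
  · rw [List.getD_eq_getElem _ _ (by simpa using h)]
    simp [swapSeq, List.getElem_ofFn, usum]
  · rw [List.getD_eq_default _ _ (by simpa using h)]
    have h2 : w.length - s = 0 := by omega
    simp [h2]

lemma usum_take_swapSeq (w : List (K × K)) :
    ∀ i, i ≤ w.length → usum ((swapSeq w).take i) = vat w (w.length - i)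
  | 0, _ => by
    simp [vat, List.getD_eq_default]
  | (i+1), h => by
    rw [usum_take_succ _ i (by simpa using by omega), usum_take_swapSeq w i (by omega),
      getD_swapSeq_fst]
    have h1 : w.length - 1 - i = w.length - (i+1) := by omega
    rw [h1]; ring


lemma getElem_swapSeq (z : List (K × K)) (t : ℕ) (h : t < (swapSeq z).length) :
    (swapSeq z)[t] = ((z.getD (z.length - 1 - t) (0,0)).2 - (z.getD (z.length - t) (0,0)).2,
      usum (z.take (z.length - t))) := by
  simp [swapSeq, List.getElem_ofFn, usum]

lemma getD_eq (w : List (K × K)) (t : ℕ) (h : t < w.length) : w[t] = w.getD t (0,0) :=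
  (List.getD_eq_getElem w (0,0) h).symm

lemma swapSeq_take (w : List (K × K)) (i : ℕ) (hi : i ≤ w.length) :
    swapSeq ((swapSeq w).take i) = Fseg (w.length - i) w := by
  have hlen : ((swapSeq w).take i).length = i := by simp; omega
  rcases Nat.eq_zero_or_pos i with rfl | hi1
  · simp [swapSeq, Fseg, show ¬ (w.length - 0 < w.length) by omega]
  have hni : w.length - i < w.length := by omega
  apply List.ext_getElem
  · simp only [length_swapSeq, hlen, Fseg, if_pos hni, List.length_cons, List.length_drop]
    omega
  · intro t h1 h2
    have ht : t < i := by rwa [length_swapSeq, hlen] at h1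
    rw [getElem_swapSeq _ t h1]
    simp only [Fseg, if_pos hni, hlen]
    rcases Nat.eq_zero_or_pos t with rfl | ht1
    · rw [List.getElem_cons_zero]
      simp only [Nat.sub_zero]
      rw [List.getD_eq_default _ _ (le_of_eq hlen)]
      rw [getD_take _ _ _ _ (show i - 1 < i by omega), getD_swapSeq_snd]
      rw [List.take_take, show i ⊓ i = i by omega, usum_take_swapSeq w i hi]
      have e : w.length - (i - 1) = w.length - i + 1 := by omega
      rw [e]
      simp
    · obtain ⟨s, rfl⟩ : ∃ s, t = s + 1 := ⟨t - 1, by omega⟩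
      rw [List.getElem_cons_succ, List.getElem_drop,
        getD_eq w _ (show w.length - i + 1 + s < w.length by omega)]
      rw [getD_take _ _ _ _ (show i - 1 - (s+1) < i by omega),
          getD_take _ _ _ _ (show i - (s+1) < i by omega),
          getD_swapSeq_snd, getD_swapSeq_snd,
          List.take_take, show (i - (s+1)) ⊓ i = i - (s+1) by omega,
          usum_take_swapSeq w _ (by omega)]
      have e1 : w.length - (i - 1 - (s+1)) = (w.length - i + 1 + s) + 1 := by omega
      have e2 : w.length - (i - (s+1)) = w.length - i + 1 + s := by omega
      rw [e1, e2, usum_take_succ _ _ (by omega)]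
      refine Prod.ext ?_ ?_
      · show usum (w.take (w.length - i + 1 + s)) + (w.getD (w.length - i + 1 + s) (0,0)).1
            - usum (w.take (w.length - i + 1 + s)) = _
        ring
      · rfl

lemma swapSeq_drop (w : List (K × K)) (i : ℕ) (hi : i ≤ w.length) :
    swapSeq ((swapSeq w).drop i) = Gseg (w.length - i) w := by
  have hlen : ((swapSeq w).drop i).length = w.length - i := by simp
  apply List.ext_getElem
  · simp [Gseg]
  · intro t h1 h2
    have ht : t < w.length - i := by rwa [length_swapSeq, hlen] at h1
    rw [getElem_swapSeq _ t h1]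
    simp only [hlen]
    have hr : (Gseg (w.length - i) w)[t] =
        ((w.getD t (0,0)).1, (w.getD t (0,0)).2 - vat w (w.length - i)) := by
      simp only [Gseg]
      rw [List.getElem_map, List.getElem_take, getD_eq w t (by omega)]
    rw [hr]
    rw [getD_drop, getD_drop, getD_swapSeq_snd, getD_swapSeq_snd]
    have e1 : w.length - (i + (w.length - i - 1 - t)) = t + 1 := by omega
    have e2 : w.length - (i + (w.length - i - t)) = t := by omega
    rw [e1, e2, usum_take_succ _ _ (by omega)]
    refine Prod.ext ?_ ?_
    · show usum (w.take t) + (w.getD t (0,0)).1 - usum (w.take t) = _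
      ring
    · show usum (((swapSeq w).drop i).take (w.length - i - t)) = _
      rw [usum_take_add, usum_take_swapSeq w _ (by omega), usum_take_swapSeq w i hi]
      rw [e2]
      rfl


@[simp] lemma length_Fseg (j : ℕ) (w : List (K × K)) : (Fseg j w).length = w.length - j := by
  unfold Fseg; split_ifs with h <;> simp <;> omega

@[simp] lemma length_Frseg (j : ℕ) (w : List (K × K)) : (Frseg j w).length = w.length - j := by
  simp [Frseg]

lemma Fseg_of_le (j : ℕ) (w : List (K × K)) (h : w.length ≤ j) : Fseg j w = [] := by
  unfold Fseg; rw [if_neg (by omega)]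

lemma Frseg_of_le (j : ℕ) (w : List (K × K)) (h : w.length ≤ j) : Frseg j w = [] := by
  unfold Frseg; rw [Fseg_of_le _ _ (by simpa using h)]; rfl

lemma usum_reverse (l : List (K × K)) : usum l.reverse = usum l := by
  simp [usum, List.sum_reverse]

lemma usum_take_drop (w : List (K × K)) (m : ℕ) :
    usum (w.take m) + usum (w.drop m) = usum w := by
  conv_rhs => rw [← List.take_append_drop m w]
  rw [usum_append]

lemma getD_reverse (w : List (K × K)) (t : ℕ) (h : t < w.length) :
    w.reverse.getD t (0,0) = w.getD (w.length - 1 - t) (0,0) := by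
  rw [List.getD_eq_getElem _ _ (by simpa using h), List.getElem_reverse,
    getD_eq _ _ (by omega)]

lemma drop_reverse' (w : List (K × K)) (k : ℕ) (h : k ≤ w.length) :
    w.reverse.drop k = (w.take (w.length - k)).reverse := by
  rw [List.reverse_take]
  congr 1
  omega

lemma take_reverse' (w : List (K × K)) (k : ℕ) :
    w.reverse.take k = (w.drop (w.length - k)).reverse := by
  have h := List.reverse_take (l := w.reverse) (i := k)
  rw [List.reverse_reverse, List.length_reverse] at h
  rw [← List.reverse_reverse (w.reverse.take k), h]

lemma Frseg_eq (w : List (K × K)) (t : ℕ) (ht : t < w.length) :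
    Frseg t w = w.take (w.length - 1 - t) ++
      [(usum (w.drop (w.length - 1 - t)), vat w (w.length - 1 - t))] := by
  unfold Frseg Fseg
  rw [if_pos (by simpa using ht), List.reverse_cons]
  congr 1
  · rw [drop_reverse' w (t+1) (by omega), List.reverse_reverse,
      show w.length - (t+1) = w.length - 1 - t by omega]
  · congr 1
    refine Prod.ext ?_ ?_
    · show usum (w.reverse.take (t+1)) = usum (w.drop (w.length - 1 - t))
      rw [take_reverse' w (t+1), usum_reverse,
        show w.length - (t+1) = w.length - 1 - t by omega]
    · show vat w.reverse t = vat w (w.length - 1 - t)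
      rw [vat, vat, getD_reverse w t ht]

lemma Grseg_eq (w : List (K × K)) (t : ℕ) (ht : t < w.length) :
    Grseg t w = (w.drop (w.length - t)).map
      (fun p => (p.1, p.2 - vat w (w.length - 1 - t))) := by
  unfold Grseg Gseg
  rw [← List.map_reverse, take_reverse' w t, List.reverse_reverse]
  congr 1
  funext p
  rw [vat, vat, getD_reverse w t ht]

lemma vat_Fseg (w : List (K × K)) (j s : ℕ) (hj : j < w.length) :
    vat (Fseg j w) s = vat w (j + s) := by
  unfold Fseg
  rw [if_pos hj]
  cases s with
  | zero => rw [vat, List.getD_cons_zero]; rfl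
  | succ s => rw [vat, List.getD_cons_succ, ← vat, vat, getD_drop, ← vat,
      show j + 1 + s = j + (s+1) by omega]

lemma drop_Fseg (w : List (K × K)) (j s : ℕ) (hj : j < w.length) (hs : 1 ≤ s) :
    (Fseg j w).drop s = w.drop (j + s) := by
  unfold Fseg
  rw [if_pos hj]
  obtain ⟨s', rfl⟩ : ∃ s', s = s' + 1 := ⟨s - 1, by omega⟩
  rw [List.drop_succ_cons, List.drop_drop, show j + 1 + s' = j + (s'+1) by omega]

lemma Grseg_Fseg (w : List (K × K)) (j t : ℕ) (h : j + t < w.length) :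
    Grseg t (Fseg j w) = Grseg t w := by
  have hj : j < w.length := by omega
  have ht : t < (Fseg j w).length := by rw [length_Fseg]; omega
  rw [Grseg_eq _ t ht, Grseg_eq w t (by omega), length_Fseg,
    drop_Fseg w j _ hj (by omega), vat_Fseg w j _ hj,
    show j + (w.length - j - t) = w.length - t by omega,
    show j + (w.length - j - 1 - t) = w.length - 1 - t by omega]

lemma vat_concat_lt (l : List (K × K)) (c : K × K) (j : ℕ) (h : j < l.length) :
    vat (l ++ [c]) j = vat l j := by
  rw [vat, List.getD_append _ _ _ _ h, vat]

lemma vat_concat_eq (l : List (K × K)) (c : K × K) :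
    vat (l ++ [c]) l.length = c.2 := by
  rw [vat, List.getD_eq_getElem _ _ (by simp), List.getElem_append]
  simp

lemma Gseg_Frseg (w : List (K × K)) (j t : ℕ) (h : j + t < w.length) :
    Gseg j (Frseg t w) = Gseg j w := by
  have ht : t < w.length := by omega
  have hk : j ≤ w.length - 1 - t := by omega
  rw [Frseg_eq w t ht]
  unfold Gseg
  rw [List.take_append_of_le_length (by simp; omega), List.take_take,
    show j ⊓ (w.length - 1 - t) = j by omega]
  congr 1
  funext p
  congr 2
  -- vat (w.take k ++ [c]) j = vat w j
  rcases lt_or_eq_of_le hk with hlt | heq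
  · rw [vat_concat_lt _ _ _ (by simp; omega), vat, getD_take _ _ _ _ hlt, vat]
  · rw [show j = (w.take (w.length - 1 - t)).length by simp; omega]
    rw [vat_concat_eq]
    show vat w (w.length - 1 - t) = vat w ((w.take (w.length - 1 - t)).length)
    congr 1
    simp
    omega


lemma Frseg_Fseg (w : List (K × K)) (j t : ℕ) (h : j + t < w.length) :
    Frseg t (Fseg j w) = Fseg j (Frseg t w) := by
  have hj : j < w.length := by omega
  have ht : t < w.length := by omega
  obtain ⟨k, hk⟩ : ∃ k, k = w.length - 1 - t := ⟨_, rfl⟩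
  have hjk : j ≤ k := by omega
  have hRHS : Fseg j (Frseg t w) =
      (usum ((Frseg t w).take (j+1)), vat (Frseg t w) j) :: (Frseg t w).drop (j+1) := by
    unfold Fseg
    rw [if_pos (by rw [length_Frseg]; omega)]
  have hxt : t < (Fseg j w).length := by rw [length_Fseg]; omega
  have hLHS : Frseg t (Fseg j w) =
      (Fseg j w).take (k - j) ++
        [(usum ((Fseg j w).drop (k - j)), vat (Fseg j w) (k - j))] := by
    rw [Frseg_eq _ t hxt, length_Fseg, show w.length - j - 1 - t = k - j by omega]
  rw [hLHS, hRHS, Frseg_eq w t ht, ← hk]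
  rcases lt_or_eq_of_le hjk with hlt | heq
  · -- j < k
    have e1 : (Fseg j w).take (k - j) =
        (usum (w.take (j+1)), vat w j) :: (w.drop (j+1)).take (k - j - 1) := by
      unfold Fseg
      rw [if_pos hj, show k - j = (k - j - 1) + 1 by omega, List.take_succ_cons,
        Nat.add_sub_cancel]
    have e2 : (Fseg j w).drop (k - j) = w.drop k := by
      rw [drop_Fseg w j _ hj (by omega), show j + (k - j) = k by omega]
    have e3 : vat (Fseg j w) (k - j) = vat w k := by
      rw [vat_Fseg w j _ hj, show j + (k - j) = k by omega]
    rw [e1, e2, e3]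
    have f1 : (w.take k ++ [(usum (w.drop k), vat w k)]).take (j+1) = w.take (j+1) := by
      rw [List.take_append_of_le_length (by simp; omega), List.take_take,
        show (j+1) ⊓ k = j + 1 by omega]
    have f2 : vat (w.take k ++ [(usum (w.drop k), vat w k)]) j = vat w j := by
      rw [vat_concat_lt _ _ _ (by simp; omega), vat, getD_take _ _ _ _ hlt, vat]
    have f3 : (w.take k ++ [(usum (w.drop k), vat w k)]).drop (j+1) =
        (w.drop (j+1)).take (k - j - 1) ++ [(usum (w.drop k), vat w k)] := by
      rw [List.drop_append_of_le_length (by simp; omega), List.drop_take,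
        show k - (j+1) = k - j - 1 by omega]
    rw [f1, f2, f3, List.cons_append]
  · -- j = k
    subst heq
    have e1 : (Fseg j w).take (j - j) = [] := by rw [Nat.sub_self]; rfl
    have e2 : usum ((Fseg j w).drop (j - j)) = usum w := by
      rw [Nat.sub_self, List.drop_zero]
      unfold Fseg
      rw [if_pos hj, ← usum_take_drop w (j+1)]
      rw [usum]
      simp only [List.map_cons, List.sum_cons]
      rfl
    have e3 : vat (Fseg j w) (j - j) = vat w j := by
      rw [Nat.sub_self, vat_Fseg w j 0 hj]
      rfl
    have f1 : usum ((w.take j ++ [(usum (w.drop j), vat w j)]).take (j+1)) = usum w := by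
      rw [List.take_of_length_le (by simp), usum_append, ← usum_take_drop w j]
      have h5 : usum [(usum (w.drop j), vat w j)] = usum (w.drop j) := by
        simp [usum]
      rw [h5]
    have f2 : vat (w.take j ++ [(usum (w.drop j), vat w j)]) j = vat w j := by
      have h6 := vat_concat_eq (w.take j) (usum (w.drop j), vat w j)
      have h7 : (w.take j).length = j := by simp; omega
      rw [h7] at h6
      rw [h6]
    have f3 : (w.take j ++ [(usum (w.drop j), vat w j)]).drop (j+1) = [] := by
      apply List.drop_eq_nil_of_le
      simp
    rw [e1, e2, e3, f1, f2, f3, List.nil_append]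


lemma swamu_eq {R : Type*} [CommRing R] (A B : Bimould K R) (w : List (K × K)) :
    swamu A B w = ∑ j ∈ Finset.range (w.length + 1), A (Fseg j w) * B (Gseg j w) := by
  have h : swamu A B w = ∑ i ∈ Finset.range (w.length + 1),
      A (swapSeq ((swapSeq w).take i)) * B (swapSeq ((swapSeq w).drop i)) := by
    simp only [swamu, swap, mu, length_swapSeq]
  rw [h, ← Finset.sum_range_reflect]
  apply Finset.sum_congr rfl
  intro j hj
  have hj' : j < w.length + 1 := Finset.mem_range.mp hj
  rw [show w.length + 1 - 1 - j = w.length - j by omega,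
    swapSeq_take w _ (by omega), swapSeq_drop w _ (by omega),
    show w.length - (w.length - j) = j by omega]

lemma answamu_eq {R : Type*} [CommRing R] (A B : Bimould K R) (w : List (K × K)) :
    answamu A B w = ∑ j ∈ Finset.range (w.length + 1), A (Frseg j w) * B (Grseg j w) := by
  have h0 : answamu A B w = swamu (anti A) (anti B) w.reverse := rfl
  rw [h0, swamu_eq, List.length_reverse]
  rfl

lemma triangle {M : Type*} [AddCommMonoid M] (N : ℕ) (f : ℕ → ℕ → M) :
    ∑ j ∈ Finset.range N, ∑ t ∈ Finset.range (N - j), f j t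
      = ∑ t ∈ Finset.range N, ∑ j ∈ Finset.range (N - t), f j t := by
  have h1 : ∀ j, ∑ t ∈ Finset.range (N - j), f j t
      = ∑ t ∈ Finset.range N, if j + t < N then f j t else 0 := by
    intro j
    rw [← Finset.sum_filter]
    apply Finset.sum_congr _ (fun _ _ => rfl)
    ext t
    simp only [Finset.mem_filter, Finset.mem_range]
    omega
  have h2 : ∀ t, ∑ j ∈ Finset.range (N - t), f j t
      = ∑ j ∈ Finset.range N, if j + t < N then f j t else 0 := by
    intro t
    rw [← Finset.sum_filter]
    apply Finset.sum_congr _ (fun _ _ => rfl)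
    ext j
    simp only [Finset.mem_filter, Finset.mem_range]
    omega
  calc ∑ j ∈ Finset.range N, ∑ t ∈ Finset.range (N - j), f j t
      = ∑ j ∈ Finset.range N, ∑ t ∈ Finset.range N, if j + t < N then f j t else 0 :=
        Finset.sum_congr rfl fun j _ => h1 j
    _ = ∑ t ∈ Finset.range N, ∑ j ∈ Finset.range N, if j + t < N then f j t else 0 :=
        Finset.sum_comm
    _ = ∑ t ∈ Finset.range N, ∑ j ∈ Finset.range (N - t), f j t :=
        Finset.sum_congr rfl fun t _ => (h2 t).symm

end Stmt8Aux

open Stmt8Aux in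
/-- For bimoulds `A, B, C` with `A(∅) = 0`,
`swamu(answamu(A,B), C) = answamu(swamu(A,C), B)`. -/
theorem stmt_8 (A B C : Bimould K R) (hA : A [] = 0) :
    swamu (answamu A B) C = answamu (swamu A C) B := by
  funext w
  rw [swamu_eq, answamu_eq]
  have hL : ∀ j ∈ Finset.range (w.length + 1),
      answamu A B (Fseg j w) * C (Gseg j w)
        = ∑ t ∈ Finset.range (w.length + 1 - j),
            A (Frseg t (Fseg j w)) * B (Grseg t (Fseg j w)) * C (Gseg j w) := by
    intro j hj
    have hj' : j < w.length + 1 := Finset.mem_range.mp hj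
    rw [answamu_eq, length_Fseg, Finset.sum_mul,
      show w.length - j + 1 = w.length + 1 - j by omega]
  have hR : ∀ t ∈ Finset.range (w.length + 1),
      swamu A C (Frseg t w) * B (Grseg t w)
        = ∑ j ∈ Finset.range (w.length + 1 - t),
            A (Fseg j (Frseg t w)) * C (Gseg j (Frseg t w)) * B (Grseg t w) := by
    intro t ht
    have ht' : t < w.length + 1 := Finset.mem_range.mp ht
    rw [swamu_eq, length_Frseg, Finset.sum_mul,
      show w.length - t + 1 = w.length + 1 - t by omega]
  rw [Finset.sum_congr rfl hL, Finset.sum_congr rfl hR, triangle]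
  apply Finset.sum_congr rfl
  intro t ht
  apply Finset.sum_congr rfl
  intro j hj
  have ht' : t < w.length + 1 := Finset.mem_range.mp ht
  have hj' : j < w.length + 1 - t := Finset.mem_range.mp hj
  rcases lt_or_ge (j + t) w.length with hlt | hge
  · rw [Frseg_Fseg w j t hlt, Grseg_Fseg w j t hlt, Gseg_Frseg w j t hlt]
    ring
  · have hjt : j + t = w.length := by omega
    have z1 : Frseg t (Fseg j w) = [] := by
      apply Frseg_of_le
      rw [length_Fseg]
      omega
    have z2 : Fseg j (Frseg t w) = [] := by
      apply Fseg_of_le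
      rw [length_Frseg]
      omega
    rw [z1, z2, hA]
    ring
end
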